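/- arXiv:1310.3293 — 7 statements merged into one kernel-verified Lean document; each statement's English description precedes it below -/
import Mathlib

section
/- Let q be a prime power and d < q a positive integer. The average cardinality of the value set over all monic polynomials f ∈ F_q[T] of degree d with f(0)=0 equals Σ_{r=1}^{d} (-1)^{r-1} · C(q,r) · q^{1-r}, where C(q,r) is the binomial coefficient. -/
open Polynomial Finset


section helpers
variable {F : Type*} [Field F]

/-- A monic polynomial of natDegree `e` equals `X^e` plus its lower coefficients. -/
lemma vs_form {p : F[X]} {e : ℕ} (hp : p.Monic) (hdeg : p.natDegree = e) :
    p = X ^ e + ∑ j : Fin e, C (p.coeff (j : ℕ)) * X ^ (j : ℕ) := by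
  ext k
  rw [coeff_add, coeff_X_pow, finset_sum_coeff]
  simp only [coeff_C_mul, coeff_X_pow, mul_ite, mul_one, mul_zero]
  rw [Fin.sum_univ_eq_sum_range (fun j => if k = j then p.coeff j else 0) e,
    Finset.sum_ite_eq (Finset.range e) k (fun j => p.coeff j)]
  rcases lt_trichotomy k e with h | h | h
  · rw [if_neg (by omega), if_pos (Finset.mem_range.mpr h), zero_add]
  · subst h
    rw [if_pos rfl, if_neg (by simp), add_zero]
    exact hdeg ▸ hp.coeff_natDegree
  · rw [if_neg (by omega), if_neg (by simp; omega), add_zero]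
    exact coeff_eq_zero_of_natDegree_lt (by omega)

lemma vs_deg {e : ℕ} (s : F[X]) (hs : s.degree < (e : ℕ)) :
    (X ^ e + s).Monic ∧ (X ^ e + s).natDegree = e := by
  have h1 : degree s < degree (X ^ e : F[X]) := by rwa [degree_X_pow]
  have hm : (X ^ e + s).Monic := (monic_X_pow e).add_of_left h1
  refine ⟨hm, ?_⟩
  have h2 : degree (X ^ e + s : F[X]) = e := by
    rw [degree_add_eq_left_of_degree_lt h1, degree_X_pow]
  exact natDegree_eq_of_degree_eq_some h2

lemma vs_sum_deg {e e' : ℕ} (a : Fin e → F) (t : ℕ → ℕ) (ht : ∀ i : Fin e, t i < e') :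
    (∑ j : Fin e, C (a j) * X ^ (t (j:ℕ)) : F[X]).degree < (e' : ℕ) := by
  refine lt_of_le_of_lt (degree_sum_le _ _) ?_
  rw [Finset.sup_lt_iff (by exact_mod_cast WithBot.bot_lt_coe _)]
  intro i _
  exact lt_of_le_of_lt (degree_C_mul_X_pow_le _ _) (by exact_mod_cast ht i)

lemma vs_coeff {e e' : ℕ} (a : Fin e → F) (t : ℕ → ℕ) (hinj : ∀ i j : Fin e, t i = t j → i = j)
    (j0 : Fin e) (hne : t j0 ≠ e') :
    (X ^ e' + ∑ j : Fin e, C (a j) * X ^ (t (j:ℕ)) : F[X]).coeff (t j0) = a j0 := by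
  rw [coeff_add, coeff_X_pow, if_neg hne, finset_sum_coeff]
  simp only [coeff_C_mul, coeff_X_pow, mul_ite, mul_one, mul_zero]
  rw [Finset.sum_eq_single j0]
  · simp
  · intro j _ hj
    rw [if_neg]
    intro h
    exact hj (hinj _ _ (by simpa using h.symm))
  · simp

lemma vs_shift_form {p : F[X]} {d : ℕ} (hd : 0 < d) (hp : p.Monic) (hdeg : p.natDegree = d)
    (h0 : p.coeff 0 = 0) :
    p = X ^ d + ∑ i : Fin (d - 1), C (p.coeff ((i : ℕ) + 1)) * X ^ ((i : ℕ) + 1) := by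
  obtain ⟨e, rfl⟩ : ∃ e, d = e + 1 := ⟨d - 1, by omega⟩
  conv_lhs => rw [vs_form hp hdeg]
  congr 1
  rw [Fin.sum_univ_eq_sum_range (fun j => C (p.coeff j) * X ^ j) (e + 1),
    Finset.sum_range_succ' (fun j => C (p.coeff j) * X ^ j) e]
  rw [h0]
  simp only [map_zero, zero_mul, add_zero]
  rw [← Fin.sum_univ_eq_sum_range (fun j => C (p.coeff (j + 1)) * X ^ (j + 1)) e]
  rfl


end helpers


lemma vs_powerset_sum {F : Type*} [Fintype F] [DecidableEq F] (P : Finset F) :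
    (∑ S ∈ P.powerset, if S.Nonempty then (-1 : ℝ) ^ (S.card + 1) else 0)
      = if P.Nonempty then 1 else 0 := by
  have hz : (∑ S ∈ P.powerset, (-1 : ℝ) ^ S.card) = if P = ∅ then 1 else 0 := by
    have := Finset.sum_powerset_neg_one_pow_card (x := P)
    have h2 : ((∑ m ∈ P.powerset, (-1 : ℤ) ^ m.card : ℤ) : ℝ)
        = ∑ m ∈ P.powerset, (-1 : ℝ) ^ m.card := by push_cast; rfl
    rw [← h2, this]
    split <;> norm_num
  have key : ∀ S ∈ P.powerset,
      (if S.Nonempty then (-1 : ℝ) ^ (S.card + 1) else 0)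
        = (-1 : ℝ) ^ (S.card + 1) + (if S = ∅ then 1 else 0) := by
    intro S _
    by_cases h : S.Nonempty
    · rw [if_pos h, if_neg h.ne_empty, add_zero]
    · rw [not_nonempty_iff_eq_empty] at h
      subst h; simp
  rw [Finset.sum_congr rfl key, Finset.sum_add_distrib]
  have h3 : (∑ S ∈ P.powerset, (-1 : ℝ) ^ (S.card + 1)) = -(if P = ∅ then 1 else 0) := by
    rw [← hz, ← Finset.sum_neg_distrib]
    exact Finset.sum_congr rfl fun S _ => by ring
  have h4 : (∑ S ∈ P.powerset, if S = ∅ then (1:ℝ) else 0) = 1 := by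
    rw [Finset.sum_ite_eq' P.powerset ∅ (fun _ => (1:ℝ))]
    simp
  rw [h3, h4]
  by_cases h : P = ∅ <;> simp [h, Finset.nonempty_iff_ne_empty]

lemma vs_incl_excl {F : Type*} [Fintype F] [DecidableEq F] (φ : F → F) :
    ((Finset.image φ Finset.univ).card : ℝ) =
      ∑ S ∈ (Finset.univ : Finset F).powerset,
        if S.Nonempty ∧ (∃ v, ∀ c ∈ S, φ c = v) then (-1 : ℝ) ^ (S.card + 1) else 0 := by
  have key : ∀ S ∈ (Finset.univ : Finset F).powerset,
      (if S.Nonempty ∧ (∃ v, ∀ c ∈ S, φ c = v) then (-1 : ℝ) ^ (S.card + 1) else 0)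
        = ∑ v : F, if S.Nonempty ∧ ∀ c ∈ S, φ c = v then (-1 : ℝ) ^ (S.card + 1) else 0 := by
    intro S _
    by_cases hS : S.Nonempty
    · obtain ⟨c0, hc0⟩ := hS
      rw [Finset.sum_eq_single (φ c0)]
      · by_cases hc : ∀ c ∈ S, φ c = φ c0
        · rw [if_pos ⟨⟨c0, hc0⟩, φ c0, hc⟩, if_pos ⟨⟨c0, hc0⟩, hc⟩]
        · rw [if_neg, if_neg]
          · rintro ⟨-, hc'⟩; exact hc hc'
          · rintro ⟨-, v, hv⟩
            exact hc fun c hcS => (hv c hcS).trans (hv c0 hc0).symm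
      · intro v _ hv
        rw [if_neg]; rintro ⟨-, h⟩; exact hv ((h c0 hc0).symm ▸ rfl)
      · intro h; exact absurd (Finset.mem_univ _) h
    · simp [hS]
  rw [Finset.sum_congr rfl key, Finset.sum_comm]
  have step2 : ∀ v : F,
      (∑ S ∈ (Finset.univ : Finset F).powerset,
          if S.Nonempty ∧ ∀ c ∈ S, φ c = v then (-1 : ℝ) ^ (S.card + 1) else 0)
        = if v ∈ Finset.image φ Finset.univ then (1:ℝ) else 0 := by
    intro v
    set T := Finset.univ.filter (fun c => φ c = v) with hT
    have hsub : T.powerset ⊆ (Finset.univ : Finset F).powerset :=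
      Finset.powerset_mono.mpr (Finset.subset_univ T)
    rw [← Finset.sum_subset hsub]
    · have hcongr : ∀ S ∈ T.powerset,
          (if S.Nonempty ∧ ∀ c ∈ S, φ c = v then (-1 : ℝ) ^ (S.card + 1) else 0)
            = if S.Nonempty then (-1 : ℝ) ^ (S.card + 1) else 0 := by
        intro S hSm
        rw [Finset.mem_powerset] at hSm
        by_cases h : S.Nonempty
        · rw [if_pos ⟨h, fun c hc => (Finset.mem_filter.mp (hSm hc)).2⟩, if_pos h]
        · simp [h]
      rw [Finset.sum_congr rfl hcongr, vs_powerset_sum]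
      congr 1
      simp only [hT, Finset.filter_nonempty_iff, Finset.mem_image, eq_iff_iff]
    · intro S _ hS
      rw [Finset.mem_powerset] at hS
      rw [if_neg]
      rintro ⟨hne, hconst⟩
      exact hS fun c hc => Finset.mem_filter.mpr ⟨Finset.mem_univ c, hconst c hc⟩
  rw [Finset.sum_congr rfl (fun v _ => step2 v)]
  rw [Finset.sum_ite_mem]
  simp


lemma vs_count {F : Type*} [Field F] [Fintype F] [DecidableEq F] {d : ℕ} (hd : 0 < d)
    (f : (Fin (d - 1) → F) → Polynomial F)
    (hf : ∀ b, f b = X ^ d + ∑ i : Fin (d - 1), C (b i) * X ^ ((i : ℕ) + 1))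
    (S : Finset F) (hS : S.Nonempty) (hr : S.card ≤ d) :
    (Finset.univ.filter fun b : Fin (d - 1) → F => ∃ v, ∀ c ∈ S, (f b).eval c = v).card
      = Fintype.card F ^ (d - S.card) := by
  classical
  have hfb : ∀ b, (f b).Monic ∧ (f b).natDegree = d := by
    intro b
    rw [hf]
    exact vs_deg _ (vs_sum_deg (fun i => b i) (fun k => k + 1)
      (fun i => show (i : ℕ) + 1 < d by have := i.2; omega))
  have hfb0 : ∀ b, (f b).coeff 0 = 0 := by
    intro b
    rw [hf]
    simp [coeff_X_pow, hd.ne']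
    omega
  have hfbc : ∀ b (i : Fin (d - 1)), (f b).coeff ((i : ℕ) + 1) = b i := by
    intro b i
    rw [hf]
    exact vs_coeff (fun i => b i) (fun k => k + 1)
      (fun i' j' hij => Fin.ext (by simpa using hij)) i
      (show (i : ℕ) + 1 ≠ d by have := i.2; omega)
  set r := S.card with hrdef
  have hr1 : 1 ≤ r := hS.card_pos
  set m : F[X] := ∏ c ∈ S, (X - C c) with hm
  have hmono : m.Monic := monic_prod_of_monic _ _ fun c _ => monic_X_sub_C c
  have hmdeg : m.natDegree = r := by
    rw [hm, natDegree_prod _ _ fun c _ => X_sub_C_ne_zero c]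
    simp [hrdef]
  have hmdeg' : m.degree = (r : ℕ) := by
    rw [degree_eq_natDegree hmono.ne_zero, hmdeg]
  have hmeval : ∀ c ∈ S, m.eval c = 0 := fun c hc => by
    rw [hm, eval_prod]
    exact Finset.prod_eq_zero hc (by simp)
  set g : (Fin (d - r) → F) → F[X] :=
    fun a => X ^ (d - r) + ∑ j : Fin (d - r), C (a j) * X ^ (j : ℕ) with hgdef
  have hg : ∀ a, (g a).Monic ∧ (g a).natDegree = d - r := fun a =>
    vs_deg _ (vs_sum_deg (fun j => a j) (fun k => k) fun i => i.isLt)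
  have hgc : ∀ a (j : Fin (d - r)), (g a).coeff (j : ℕ) = a j := fun a j =>
    vs_coeff (fun j => a j) (fun k => k) (fun i' j' hij => Fin.ext hij) j
      (show (j : ℕ) ≠ d - r by have := j.2; omega)
  set h : (Fin (d - r) → F) → F[X] :=
    fun a => m * g a + C (-(m.eval 0 * (g a).eval 0)) with hhdef
  have hh : ∀ a, (h a).Monic ∧ (h a).natDegree = d ∧ (h a).coeff 0 = 0 := by
    intro a
    have h1 : (m * g a).Monic := hmono.mul (hg a).1
    have h2 : (m * g a).natDegree = d := by
      rw [hmono.natDegree_mul (hg a).1, hmdeg, (hg a).2]; omega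
    refine ⟨?_, ?_, ?_⟩
    · apply h1.add_of_left
      rw [degree_eq_natDegree h1.ne_zero, h2]
      exact lt_of_le_of_lt degree_C_le (by exact_mod_cast hd)
    · rw [hhdef, natDegree_add_C, h2]
    · rw [coeff_zero_eq_eval_zero, hhdef]
      simp
  have hhf : ∀ a, h a = f fun i => (h a).coeff ((i : ℕ) + 1) := by
    intro a
    rw [hf]
    exact vs_shift_form hd (hh a).1 (hh a).2.1 (hh a).2.2
  have hheval : ∀ a, ∀ c ∈ S, (h a).eval c = -(m.eval 0 * (g a).eval 0) := by
    intro a c hc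
    rw [hhdef]
    simp [hmeval c hc]
  -- division facts for "good" b
  have hdiv : ∀ b v, (∀ c ∈ S, (f b).eval c = v) →
      (f b) /ₘ m = g (fun j => ((f b) /ₘ m).coeff (j : ℕ))
        ∧ f b = m * ((f b) /ₘ m) + C v
        ∧ v = -(m.eval 0 * ((f b) /ₘ m).eval 0) := by
    intro b v hv
    have hne : f b - C v ≠ 0 := by
      intro hzero
      have : (f b - C v).natDegree = d := by rw [natDegree_sub_C, (hfb b).2]
      rw [hzero] at this
      simp at this
      omega
    have hdvd : m ∣ f b - C v := by
      have hle : S.val ≤ (f b - C v).roots := by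
        rw [Multiset.le_iff_subset S.nodup]
        intro c hc
        rw [Polynomial.mem_roots hne]
        simp [IsRoot, hv c hc]
      rw [hm, Finset.prod_eq_multiset_prod]
      exact (Multiset.prod_X_sub_C_dvd_iff_le_roots hne S.val).mpr hle
    obtain ⟨g0, hg0⟩ := hdvd
    have hfbeq : C v + m * g0 = f b := by rw [← hg0]; ring
    have huniq := div_modByMonic_unique g0 (C v) hmono
      ⟨hfbeq, by rw [hmdeg']; exact lt_of_le_of_lt degree_C_le (by exact_mod_cast hr1)⟩
    have hmg0 : (m * g0).Monic := by
      have : (f b - C v).Monic := by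
        rw [sub_eq_add_neg]
        apply (hfb b).1.add_of_left
        rw [degree_eq_natDegree (hfb b).1.ne_zero, (hfb b).2]
        exact lt_of_le_of_lt (degree_neg (C v) ▸ degree_C_le) (by exact_mod_cast hd)
      rwa [hg0] at this
    have hg0m : g0.Monic := hmono.of_mul_monic_left hmg0
    have hg0d : g0.natDegree = d - r := by
      have hh2 : (m * g0).natDegree = d := by rw [← hg0, natDegree_sub_C, (hfb b).2]
      rw [hmono.natDegree_mul hg0m, hmdeg] at hh2
      omega
    rw [huniq.1]
    have hgeq : g (fun j => g0.coeff (j : ℕ)) = g0 := by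
      rw [hgdef]
      exact (vs_form hg0m hg0d).symm
    have hveq : v = -(m.eval 0 * g0.eval 0) := by
      have h0 : (f b).eval 0 = 0 := by rw [← coeff_zero_eq_eval_zero]; exact hfb0 b
      have := hfbeq
      have h1 : (C v + m * g0).eval 0 = (f b).eval 0 := by rw [this]
      simp [h0] at h1
      linear_combination h1
    exact ⟨hgeq.symm, by rw [← hfbeq]; ring, hveq⟩
  -- the bijection
  have hcard : Fintype.card F ^ (d - r) = (Finset.univ : Finset (Fin (d - r) → F)).card := by
    rw [Finset.card_univ, Fintype.card_fun]
    simp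
  rw [hcard]
  apply Finset.card_bij' (i := fun b _ => fun j : Fin (d - r) => ((f b) /ₘ m).coeff (j : ℕ))
    (j := fun a _ => fun i : Fin (d - 1) => (h a).coeff ((i : ℕ) + 1))
  · intro a _
    exact Finset.mem_univ _
  · intro a _
    rw [Finset.mem_filter]
    refine ⟨Finset.mem_univ _, -(m.eval 0 * (g a).eval 0), fun c hc => ?_⟩
    rw [← hhf a]
    exact hheval a c hc
  · -- left inverse : j (i b) = b
    intro b hb
    rw [Finset.mem_filter] at hb
    obtain ⟨-, v, hv⟩ := hb
    obtain ⟨hq1, hq2, hq3⟩ := hdiv b v hv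
    funext i
    have hfb_eq_h : h (fun j => ((f b) /ₘ m).coeff (j : ℕ)) = f b := by
      rw [hhdef]
      dsimp only
      rw [← hq1, ← hq3, ← hq2]
    rw [hfb_eq_h]
    exact hfbc b i
  · -- right inverse : i (j a) = a
    intro a _
    funext j
    have hfa : f (fun i => (h a).coeff ((i : ℕ) + 1)) = h a := (hhf a).symm
    have heq : C (-(m.eval 0 * (g a).eval 0)) + m * g a
        = f (fun i => (h a).coeff ((i : ℕ) + 1)) := by
      rw [hfa, hhdef]
      ring
    have huniq := div_modByMonic_unique (g a) (C (-(m.eval 0 * (g a).eval 0))) hmono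
      ⟨heq, by rw [hmdeg']; exact lt_of_le_of_lt degree_C_le (by exact_mod_cast hr1)⟩
    rw [huniq.1]
    exact hgc a j

lemma vs_count_big {F : Type*} [Field F] [Fintype F] [DecidableEq F] {d : ℕ} (hd : 0 < d)
    (f : (Fin (d - 1) → F) → Polynomial F)
    (hf : ∀ b, f b = X ^ d + ∑ i : Fin (d - 1), C (b i) * X ^ ((i : ℕ) + 1))
    (S : Finset F) (hr : d < S.card) :
    (Finset.univ.filter fun b : Fin (d - 1) → F => ∃ v, ∀ c ∈ S, (f b).eval c = v) = ∅ := by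
  classical
  rw [Finset.filter_eq_empty_iff]
  rintro b - ⟨v, hv⟩
  have hfb : (f b).Monic ∧ (f b).natDegree = d := by
    rw [hf]
    refine ⟨?_, ?_⟩ <;>
    · first
      | exact (vs_deg _ (vs_sum_deg (fun i => b i) (fun k => k + 1)
          (fun i => show (i : ℕ) + 1 < d by have := i.2; omega))).1
      | exact (vs_deg _ (vs_sum_deg (fun i => b i) (fun k => k + 1)
          (fun i => show (i : ℕ) + 1 < d by have := i.2; omega))).2
  have hne : f b - C v ≠ 0 := by
    intro hzero
    have h1 : (f b - C v).natDegree = d := by rw [natDegree_sub_C, hfb.2]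
    rw [hzero] at h1
    simp at h1
    omega
  have hle : S.val ≤ (f b - C v).roots := by
    rw [Multiset.le_iff_subset S.nodup]
    intro c hc
    rw [Polynomial.mem_roots hne]
    simp [IsRoot, hv c hc]
  have h2 := Multiset.card_le_card hle
  simp only [Finset.card_def] at hr ⊢
  have h3 := Polynomial.card_roots' (f b - C v)
  rw [natDegree_sub_C, hfb.2] at h3
  omega

/-- The average cardinality of the value set over all monic polynomials
`f ∈ F_q[T]` of degree `d` (with `d < q`) satisfying `f(0) = 0` equals
`∑_{r=1}^{d} (-1)^{r-1} C(q,r) q^{1-r}`.  Such polynomials are parametrized by their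
coefficients `b : Fin (d-1) → F` via `f_b = X^d + ∑ i, b i • X^{i+1}`. -/
theorem stmt_1 {F : Type*} [Field F] [Fintype F] [DecidableEq F] (q d : ℕ)
    (hq : Fintype.card F = q) (hd : 0 < d) (hdq : d < q)
    (f : (Fin (d - 1) → F) → Polynomial F)
    (hf : ∀ b, f b = X ^ d + ∑ i : Fin (d - 1), C (b i) * X ^ ((i : ℕ) + 1)) :
    (∑ b : Fin (d - 1) → F,
        ((Finset.image (fun c => (f b).eval c) Finset.univ).card : ℝ)) / (q : ℝ) ^ (d - 1)
      = ∑ r ∈ Finset.Icc 1 d,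
          (-1 : ℝ) ^ (r - 1) * (Nat.choose q r : ℝ) * (q : ℝ) ^ ((1 : ℤ) - (r : ℤ)) := by
  classical
  have hqR : (q : ℝ) ≠ 0 := Nat.cast_ne_zero.mpr (by omega)
  have htotal : (∑ b : Fin (d - 1) → F,
      ((Finset.image (fun c => (f b).eval c) Finset.univ).card : ℝ))
      = ∑ rr ∈ Finset.Icc 1 d,
          (-1 : ℝ) ^ (rr + 1) * (Nat.choose q rr : ℝ) * (q : ℝ) ^ (d - rr) := by
    rw [Finset.sum_congr rfl fun b _ => vs_incl_excl (fun c => (f b).eval c), Finset.sum_comm]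
    have step2 : ∀ S ∈ (Finset.univ : Finset F).powerset,
        (∑ b : Fin (d - 1) → F,
            if S.Nonempty ∧ (∃ v, ∀ c ∈ S, (f b).eval c = v)
            then (-1 : ℝ) ^ (S.card + 1) else 0)
          = if S.Nonempty ∧ S.card ≤ d
            then (-1 : ℝ) ^ (S.card + 1) * (q : ℝ) ^ (d - S.card) else 0 := by
      intro S _
      by_cases hS : S.Nonempty
      · simp only [hS, true_and]
        rw [← Finset.sum_filter]
        by_cases hrd : S.card ≤ d
        · rw [if_pos hrd, Finset.sum_const, vs_count hd f hf S hS hrd, hq, nsmul_eq_mul]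
          push_cast
          ring
        · rw [if_neg hrd, vs_count_big hd f hf S (by omega), Finset.sum_empty]
      · simp [hS]
    rw [Finset.sum_congr rfl step2]
    have hmaps : ∀ S ∈ (Finset.univ : Finset F).powerset, S.card ∈ Finset.range (q + 1) := by
      intro S hSm
      rw [Finset.mem_range]
      have := Finset.card_le_card (Finset.mem_powerset.mp hSm)
      rw [Finset.card_univ, hq] at this
      omega
    rw [← Finset.sum_fiberwise_of_maps_to hmaps]
    have inner : ∀ rr ∈ Finset.range (q + 1),
        (∑ S ∈ (Finset.univ : Finset F).powerset.filter fun S => S.card = rr,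
            if S.Nonempty ∧ S.card ≤ d
            then (-1 : ℝ) ^ (S.card + 1) * (q : ℝ) ^ (d - S.card) else 0)
          = if 1 ≤ rr ∧ rr ≤ d
            then (-1 : ℝ) ^ (rr + 1) * (Nat.choose q rr : ℝ) * (q : ℝ) ^ (d - rr) else 0 := by
      intro rr _
      by_cases h1 : 1 ≤ rr ∧ rr ≤ d
      · rw [if_pos h1]
        have hterm : ∀ S ∈ (Finset.univ : Finset F).powerset.filter fun S => S.card = rr,
            (if S.Nonempty ∧ S.card ≤ d
              then (-1 : ℝ) ^ (S.card + 1) * (q : ℝ) ^ (d - S.card) else 0)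
              = (-1 : ℝ) ^ (rr + 1) * (q : ℝ) ^ (d - rr) := by
          intro S hSm
          have hc : S.card = rr := (Finset.mem_filter.mp hSm).2
          rw [if_pos ⟨Finset.card_pos.mp (by omega), by omega⟩, hc]
        rw [Finset.sum_congr rfl hterm, Finset.sum_const, ← Finset.powersetCard_eq_filter,
          Finset.card_powersetCard, Finset.card_univ, hq, nsmul_eq_mul]
        ring
      · rw [if_neg h1]
        apply Finset.sum_eq_zero
        intro S hSm
        have hc : S.card = rr := (Finset.mem_filter.mp hSm).2
        rw [if_neg]
        rintro ⟨hne, hle⟩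
        have := Finset.card_pos.mpr hne
        omega
    rw [Finset.sum_congr rfl inner]
    rw [← Finset.sum_subset (by intro x hx; rw [Finset.mem_Icc] at hx; rw [Finset.mem_range]; omega :
        Finset.Icc 1 d ⊆ Finset.range (q + 1))]
    · exact Finset.sum_congr rfl fun rr hrr => by
        rw [Finset.mem_Icc] at hrr
        rw [if_pos hrr]
    · intro rr _ hrr
      rw [Finset.mem_Icc] at hrr
      rw [if_neg (by omega)]
  rw [htotal, Finset.sum_div]
  refine Finset.sum_congr rfl fun rr hrr => ?_
  rw [Finset.mem_Icc] at hrr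
  have e1 : ((-1 : ℝ)) ^ (rr + 1) = (-1 : ℝ) ^ (rr - 1) := by
    rw [show rr + 1 = (rr - 1) + 2 by omega, pow_add]
    norm_num
  have e2 : ((q : ℝ)) ^ (d - rr) / (q : ℝ) ^ (d - 1) = (q : ℝ) ^ ((1 : ℤ) - (rr : ℤ)) := by
    rw [← zpow_natCast (q : ℝ) (d - rr), ← zpow_natCast (q : ℝ) (d - 1), ← zpow_sub₀ hqR]
    congr 1
    push_cast [Nat.cast_sub hrr.2, Nat.cast_sub (by omega : 1 ≤ d)]
    omega
  rw [mul_div_assoc, e1, e2]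
end

section
/- Let K be a field, f ∈ K[T] a polynomial, and define the divided differences Δ^0 f(X_1) := f(X_1) and Δ^i f(X_1,...,X_{i+1}) := (Δ^{i-1}f(X_1,...,X_i) - Δ^{i-1}f(X_1,...,X_{i-1},X_{i+1}))/(X_i - X_{i+1}). If α_1,...,α_r are elements of K with Δ^{i-1}f(α_1,...,α_i) = 0 for all 1 ≤ i ≤ r, then f(α_i) = 0 for all 1 ≤ i ≤ r. -/
open Polynomial MvPolynomial

/-- A family `Δ i` of multivariate polynomials (in variables `X_0, …, X_i`) is the family of
divided differences of a univariate polynomial `f`: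
`Δ^0 f = f(X_0)` and `(X_i - X_{i+1}) · Δ^{i+1} f = Δ^i f(X_0,…,X_i) - Δ^i f(X_0,…,X_{i-1},X_{i+1})`
(the division is exact, so this recursion characterizes the polynomials `Δ^i f`). -/
def IsDividedDifferenceFamily {R : Type*} [CommRing R] (f : Polynomial R)
    (Δ : (i : ℕ) → MvPolynomial (Fin (i + 1)) R) : Prop :=
  Δ 0 = Polynomial.aeval (MvPolynomial.X (0 : Fin 1)) f ∧
  ∀ i : ℕ,
    (MvPolynomial.X ((Fin.last i).castSucc) - MvPolynomial.X (Fin.last (i + 1))) * Δ (i + 1) =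
      MvPolynomial.rename Fin.castSucc (Δ i) -
        MvPolynomial.rename
          (fun j : Fin (i + 1) => if j = Fin.last i then Fin.last (i + 1) else j.castSucc) (Δ i)

/-- If all the divided differences `Δ^{i-1} f(α_1,…,α_i)` vanish for
`1 ≤ i ≤ r`, then `f(α_i) = 0` for all `1 ≤ i ≤ r` (the `α_i` need not be distinct). -/
theorem stmt_2 {K : Type*} [Field K] (f : Polynomial K)
    (Δ : (i : ℕ) → MvPolynomial (Fin (i + 1)) K)
    (hΔ : IsDividedDifferenceFamily f Δ)
    (r : ℕ) (α : Fin r → K)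
    (h : ∀ i : Fin r,
      MvPolynomial.eval (fun j : Fin ((i : ℕ) + 1) => α (Fin.castLE i.isLt j)) (Δ i) = 0) :
    ∀ i : Fin r, f.eval (α i) = 0 := by
  obtain ⟨h0, hrec⟩ := hΔ
  intro i
  -- evaluation point: α_0, …, α_{k-1}, α_i
  set v : (k : ℕ) → Fin (k + 1) → K := fun k j =>
    if hj : (j : ℕ) < r ∧ (j : ℕ) ≠ k then α ⟨j, hj.1⟩ else α i with hv
  set e : ℕ → K := fun k => MvPolynomial.eval (v k) (Δ k) with he
  have hei : e (i : ℕ) = 0 := by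
    show MvPolynomial.eval (v (i : ℕ)) (Δ (i : ℕ)) = 0
    have hfun : v (i : ℕ) = fun j : Fin ((i : ℕ) + 1) => α (Fin.castLE i.isLt j) := by
      funext j
      simp only [hv]
      split
      · next hj => exact congrArg α (Fin.ext rfl)
      · next hj =>
        have hjr : (j : ℕ) < r := lt_of_le_of_lt (Nat.lt_succ_iff.mp j.isLt) i.isLt
        have : (j : ℕ) = (i : ℕ) := by tauto
        exact congrArg α (Fin.ext this.symm)
    rw [hfun]
    exact h i
  have hstep : ∀ k : ℕ, k + 1 ≤ (i : ℕ) → e (k + 1) = 0 → e k = 0 := by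
    intro k hk hk1
    have hkr : k < r := lt_trans (Nat.lt_of_succ_le hk) i.isLt
    have key := congrArg (MvPolynomial.eval (v (k + 1))) (hrec k)
    simp only [map_mul, map_sub, MvPolynomial.eval_X, MvPolynomial.eval_rename] at key
    rw [show MvPolynomial.eval (v (k+1)) (Δ (k+1)) = e (k+1) from rfl, hk1, mul_zero] at key
    have h1 : MvPolynomial.eval (v (k + 1) ∘ Fin.castSucc) (Δ k) = 0 := by
      have hk' := h ⟨k, hkr⟩
      have hfun : v (k + 1) ∘ Fin.castSucc
          = fun j : Fin (k + 1) => α (Fin.castLE (Fin.mk k hkr).isLt j) := by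
        funext j
        have hjk : (j : ℕ) ≤ k := Nat.lt_succ_iff.mp j.isLt
        have hjr : (j : ℕ) < r := lt_of_le_of_lt hjk hkr
        simp only [Function.comp, hv, Fin.coe_castSucc]
        rw [dif_pos ⟨hjr, by omega⟩]
        exact congrArg α (Fin.ext rfl)
      rw [hfun]
      exact hk'
    have h2 : MvPolynomial.eval
        (v (k + 1) ∘ fun j : Fin (k + 1) =>
          if j = Fin.last k then Fin.last (k + 1) else j.castSucc) (Δ k) = e k := by
      rw [he]
      have hfun : (v (k + 1) ∘ fun j : Fin (k + 1) =>
          if j = Fin.last k then Fin.last (k + 1) else j.castSucc) = v k := by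
        funext j
        simp only [Function.comp, hv]
        by_cases hj : j = Fin.last k
        · subst hj
          rw [if_pos rfl, dif_neg (by simp), dif_neg (by simp)]
        · have hjk : (j : ℕ) < k := by
            have hle := Nat.lt_succ_iff.mp j.isLt
            rcases lt_or_eq_of_le hle with h' | h'
            · exact h'
            · exact absurd (Fin.ext h') hj
          have hjr : (j : ℕ) < r := lt_trans hjk hkr
          rw [if_neg hj]
          simp only [Fin.coe_castSucc]
          rw [dif_pos ⟨hjr, by omega⟩, dif_pos ⟨hjr, by omega⟩]
      rw [hfun]
    rw [h1, h2, zero_sub] at key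
    exact neg_eq_zero.mp key.symm
  have claim : ∀ d : ℕ, d ≤ (i : ℕ) → e ((i : ℕ) - d) = 0 := by
    intro d
    induction d with
    | zero => intro _; simpa using hei
    | succ d ih =>
      intro hd
      have hk : (i : ℕ) - (d + 1) + 1 ≤ (i : ℕ) := by omega
      apply hstep _ hk
      rw [show (i : ℕ) - (d + 1) + 1 = (i : ℕ) - d from by omega]
      exact ih (by omega)
  have he0 : MvPolynomial.eval (v 0) (Δ 0) = 0 := by
    have := claim (i : ℕ) le_rfl
    simpa [he] using this
  rw [h0] at he0
  rw [show (MvPolynomial.eval (v 0)) ((Polynomial.aeval (MvPolynomial.X (0 : Fin 1))) f)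
      = f.eval (v 0 0) from ?_] at he0
  · rw [show v 0 0 = α i from ?_] at he0
    · exact he0
    · simp only [hv]
      rw [dif_neg (by simp)]
  · rw [Polynomial.aeval_def, Polynomial.hom_eval₂,
      show (MvPolynomial.eval (v 0)).comp (algebraMap K (MvPolynomial (Fin 1) K)) = RingHom.id K
        from RingHom.ext fun x => by simp [MvPolynomial.algebraMap_eq]]
    simp [MvPolynomial.eval_X, Polynomial.eval, -Polynomial.eval₂_id]
end

section
/- Let K be a field and consider the polynomial ring K[X_1,...,X_n] with a weight function wt assigning positive integer weight a_i to X_i. If f ∈ K[X_1,...,X_n] is nonconstant and its weighted homogeneous component of highest weight is irreducible in K[X_1,...,X_n], then f is irreducible in K[X_1,...,X_n]. -/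
open MvPolynomial

namespace Stmt5Aux

variable {K : Type*} [Field K] {n : ℕ}

/-- The top weighted homogeneous component. -/
noncomputable def L (w : Fin n → ℕ) (f : MvPolynomial (Fin n) K) : MvPolynomial (Fin n) K :=
  weightedHomogeneousComponent w (weightedTotalDegree w f) f

theorem L_isWH (w : Fin n → ℕ) (f : MvPolynomial (Fin n) K) :
    IsWeightedHomogeneous w (L w f) (weightedTotalDegree w f) :=
  weightedHomogeneousComponent_isWeightedHomogeneous _ _

theorem L_ne_zero (w : Fin n → ℕ) {f : MvPolynomial (Fin n) K} (hf : f ≠ 0) :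
    L w f ≠ 0 := by
  classical
  obtain ⟨d, hd, hsup⟩ := Finset.exists_mem_eq_sup f.support
    (support_nonempty.mpr hf) (fun s => Finsupp.weight w s)
  intro h0
  have : coeff d (L w f) = coeff d f := by
    rw [L, coeff_weightedHomogeneousComponent, if_pos]
    exact (by rw [weightedTotalDegree, hsup])
  rw [h0, coeff_zero] at this
  exact (mem_support_iff.mp hd) this.symm

theorem weight_lt_of_mem_support_sub (w : Fin n → ℕ) {f : MvPolynomial (Fin n) K}
    {d : Fin n →₀ ℕ} (hd : d ∈ (f - L w f).support) :
    Finsupp.weight w d < weightedTotalDegree w f := by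
  classical
  have hcoeff : coeff d (f - L w f) ≠ 0 := mem_support_iff.mp hd
  have hne : Finsupp.weight w d ≠ weightedTotalDegree w f := by
    intro h
    apply hcoeff
    rw [coeff_sub, L, coeff_weightedHomogeneousComponent, if_pos h, sub_self]
  have hmem : d ∈ f.support := by
    rw [mem_support_iff]
    intro h
    apply hcoeff
    rw [coeff_sub, h, L, coeff_weightedHomogeneousComponent]
    split <;> simp [h]
  exact lt_of_le_of_ne (le_weightedTotalDegree w hmem) hne

theorem main_mul (w : Fin n → ℕ) {p q : MvPolynomial (Fin n) K} (hp : p ≠ 0) (hq : q ≠ 0) :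
    weightedTotalDegree w (p * q) = weightedTotalDegree w p + weightedTotalDegree w q ∧
      L w (p * q) = L w p * L w q := by
  classical
  set P := L w p with hPdef
  set Q := L w q with hQdef
  set Dp := weightedTotalDegree w p
  set Dq := weightedTotalDegree w q
  have hPQ : IsWeightedHomogeneous w (P * Q) (Dp + Dq) := (L_isWH w p).mul (L_isWH w q)
  have hPQ0 : P * Q ≠ 0 := mul_ne_zero (L_ne_zero w hp) (L_ne_zero w hq)
  have hr : p * q - P * Q = (p - P) * q + P * (q - Q) := by ring
  -- every monomial of the remainder has weight < Dp + Dq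
  have hrlt : ∀ d ∈ (p * q - P * Q).support, Finsupp.weight w d < Dp + Dq := by
    intro d hd
    rw [hr] at hd
    rcases Finset.mem_union.mp (MvPolynomial.support_add hd) with h1 | h2
    · obtain ⟨a, ha, b, hb, hab⟩ := Finset.mem_add.mp (support_mul _ _ h1)
      have ha' : Finsupp.weight w a < Dp := weight_lt_of_mem_support_sub w ha
      have hb' : Finsupp.weight w b ≤ Dq := le_weightedTotalDegree w hb
      rw [← hab, map_add]
      exact add_lt_add_of_lt_of_le ha' hb'
    · obtain ⟨a, ha, b, hb, hab⟩ := Finset.mem_add.mp (support_mul _ _ h2)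
      have ha' : Finsupp.weight w a = Dp := L_isWH w p (mem_support_iff.mp ha)
      have hb' : Finsupp.weight w b < Dq := weight_lt_of_mem_support_sub w hb
      rw [← hab, map_add, ha']
      exact add_lt_add_right hb' _
  -- upper bound for the degree
  have hDle : weightedTotalDegree w (p * q) ≤ Dp + Dq := by
    apply Finset.sup_le
    intro d hd
    obtain ⟨a, ha, b, hb, hab⟩ := Finset.mem_add.mp (support_mul _ _ hd)
    rw [← hab, map_add]
    exact add_le_add (le_weightedTotalDegree w ha) (le_weightedTotalDegree w hb)
  -- a monomial of P * Q survives in p * q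
  obtain ⟨d0, hd0⟩ := exists_coeff_ne_zero hPQ0
  have hwd0 : Finsupp.weight w d0 = Dp + Dq := hPQ hd0
  have hrzero : coeff d0 (p * q - P * Q) = 0 := by
    by_contra h
    exact absurd hwd0 (ne_of_lt (hrlt d0 (mem_support_iff.mpr h)))
  have hcoeq : coeff d0 (p * q) = coeff d0 (P * Q) := by
    have h' : coeff d0 (p * q) - coeff d0 (P * Q) = 0 := by simpa using hrzero
    exact sub_eq_zero.mp h'
  have hdeg : weightedTotalDegree w (p * q) = Dp + Dq := by
    refine le_antisymm hDle ?_
    have hmem : d0 ∈ (p * q).support := mem_support_iff.mpr (by rw [hcoeq]; exact hd0)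
    calc Dp + Dq = Finsupp.weight w d0 := hwd0.symm
      _ ≤ weightedTotalDegree w (p * q) := le_weightedTotalDegree w hmem
  refine ⟨hdeg, ?_⟩
  have hsplit : p * q = P * Q + (p * q - P * Q) := by ring
  rw [L, hdeg]
  calc weightedHomogeneousComponent w (Dp + Dq) (p * q)
      = weightedHomogeneousComponent w (Dp + Dq) (P * Q) +
          weightedHomogeneousComponent w (Dp + Dq) (p * q - P * Q) := by
        rw [← map_add]; exact congrArg _ hsplit
    _ = P * Q + 0 := by
        rw [hPQ.weightedHomogeneousComponent_same,
          weightedHomogeneousComponent_eq_zero' _ _ (fun d hd => ne_of_lt (hrlt d hd))]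
    _ = P * Q := add_zero _

theorem weightedTotalDegree_one (w : Fin n → ℕ) :
    weightedTotalDegree w (1 : MvPolynomial (Fin n) K) = 0 :=
  isWeightedHomogeneous_zero_iff_weightedTotalDegree_eq_zero.mp (isWeightedHomogeneous_one K w)

theorem eq_C_of_deg_zero (w : Fin n → ℕ) (hw : ∀ i, 0 < w i) {p : MvPolynomial (Fin n) K}
    (h : weightedTotalDegree w p = 0) : p = C (coeff 0 p) := by
  classical
  have hnt : NonTorsionWeight w := nonTorsionWeight_of (fun i => (hw i).ne')
  have hsupp := (weightedTotalDegree_eq_zero_iff hnt p).mp h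
  ext d
  rw [coeff_C]
  split_ifs with hd
  · subst hd; rfl
  · by_contra hne
    have hmem : d ∈ p.support := mem_support_iff.mpr (by simpa using hne)
    exact hd (Finsupp.ext fun x => hsupp d hmem x).symm

theorem deg_eq_zero_of_isUnit (w : Fin n → ℕ) {p : MvPolynomial (Fin n) K} (hp : p ≠ 0)
    (h : IsUnit p) : weightedTotalDegree w p = 0 := by
  obtain ⟨u, hu⟩ := isUnit_iff_exists_inv.mp h
  have hu0 : u ≠ 0 := by
    rintro rfl
    rw [mul_zero] at hu
    exact one_ne_zero hu.symm
  have := (main_mul w hp hu0).1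
  rw [hu, weightedTotalDegree_one] at this
  omega

theorem isUnit_of_L_isUnit (w : Fin n → ℕ) (hw : ∀ i, 0 < w i) {p : MvPolynomial (Fin n) K}
    (hp : p ≠ 0) (h : IsUnit (L w p)) : IsUnit p := by
  have hL0 : L w p ≠ 0 := L_ne_zero w hp
  have hLdeg : weightedTotalDegree w (L w p) = weightedTotalDegree w p := by
    have h1 := (L_isWH w p).weighted_total_degree hL0
    have h2 := weightedTotalDegree_coe w (L w p) hL0
    rw [h2] at h1
    exact_mod_cast h1
  have hdeg : weightedTotalDegree w p = 0 := by
    rw [← hLdeg]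
    exact deg_eq_zero_of_isUnit w hL0 h
  have hpc := eq_C_of_deg_zero w hw hdeg
  have hc : coeff 0 p ≠ 0 := by
    intro h0
    apply hp
    rw [hpc, h0, map_zero]
  rw [hpc]
  exact (isUnit_iff_ne_zero.mpr hc).map (C : K →+* MvPolynomial (Fin n) K)

end Stmt5Aux

/-- Let `K` be a field and give `K[X_1,…,X_n]` the weight function assigning
positive weight `w i` to `X_i`.  If `f` is nonconstant and its weighted homogeneous component
of highest weight is irreducible, then `f` is irreducible. -/
theorem stmt_5 {K : Type*} [Field K] {n : ℕ} (w : Fin n → ℕ) (hw : ∀ i, 0 < w i)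
    (f : MvPolynomial (Fin n) K) (hf : ∀ c : K, f ≠ MvPolynomial.C c)
    (hirr : Irreducible
      (MvPolynomial.weightedHomogeneousComponent w (MvPolynomial.weightedTotalDegree w f) f)) :
    Irreducible f := by
  have hf0 : f ≠ 0 := by
    intro h
    exact hf 0 (by rw [h, map_zero])
  constructor
  · intro hu
    have hdeg := Stmt5Aux.deg_eq_zero_of_isUnit w hf0 hu
    exact hf _ (Stmt5Aux.eq_C_of_deg_zero w hw hdeg)
  · intro p q hpq
    have hp0 : p ≠ 0 := by rintro rfl; rw [zero_mul] at hpq; exact hf0 hpq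
    have hq0 : q ≠ 0 := by rintro rfl; rw [mul_zero] at hpq; exact hf0 hpq
    subst hpq
    obtain ⟨-, hL⟩ := Stmt5Aux.main_mul w hp0 hq0
    have hirr' : Irreducible (Stmt5Aux.L w (p * q)) := hirr
    rcases hirr'.isUnit_or_isUnit hL with h | h
    · exact Or.inl (Stmt5Aux.isUnit_of_L_isUnit w hw hp0 h)
    · exact Or.inr (Stmt5Aux.isUnit_of_L_isUnit w hw hq0 h)
end

section
/- Let K be an algebraically closed field, and let g ∈ K[X,Y] be a polynomial that is the sum of two nonzero homogeneous polynomials h_d and h_{d+1} of consecutive degrees d and d+1 having no common (non-unit) factor. Then g is irreducible in K[X,Y]. -/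
open MvPolynomial

section Aux

variable {K : Type*} [Field K]

/-- The homogenization map `K[X,Y] → K[X,Y][t]`, `Xᵢ ↦ C Xᵢ * t`. -/
noncomputable def stmt9Phi (K : Type*) [Field K] :
    MvPolynomial (Fin 2) K →ₐ[K] Polynomial (MvPolynomial (Fin 2) K) :=
  MvPolynomial.aeval fun i => Polynomial.C (MvPolynomial.X i) * Polynomial.X

lemma stmt9Phi_monomial (s : Fin 2 →₀ ℕ) (k : K) :
    stmt9Phi K (MvPolynomial.monomial s k) =
      Polynomial.C (MvPolynomial.monomial s k) * Polynomial.X ^ (Finsupp.weight 1 s) := by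
  rw [stmt9Phi, MvPolynomial.aeval_monomial, MvPolynomial.monomial_eq]
  have h1 : (Finsupp.prod s fun i e => (Polynomial.C (MvPolynomial.X i : MvPolynomial (Fin 2) K)
      * Polynomial.X) ^ e) =
      Polynomial.C (Finsupp.prod s fun i e => (MvPolynomial.X i : MvPolynomial (Fin 2) K) ^ e)
        * Polynomial.X ^ (Finsupp.weight 1 s) := by
    rw [Finsupp.prod]
    simp only [mul_pow, ← Polynomial.C_pow]
    rw [Finset.prod_mul_distrib, ← map_prod, Finsupp.prod, Finset.prod_pow_eq_pow_sum]
    congr 1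
    simp [Finsupp.weight_apply, Finsupp.sum]
  rw [h1]
  simp only [algebraMap_eq, Polynomial.algebraMap_apply, ← mul_assoc, ← Polynomial.C_mul]

lemma stmt9Phi_isHomogeneous {h : MvPolynomial (Fin 2) K} {n : ℕ}
    (hh : h.IsHomogeneous n) :
    stmt9Phi K h = Polynomial.C h * Polynomial.X ^ n := by
  conv_lhs => rw [h.as_sum]
  rw [map_sum]
  have : ∀ s ∈ h.support, stmt9Phi K (MvPolynomial.monomial s (MvPolynomial.coeff s h)) =
      Polynomial.C (MvPolynomial.monomial s (MvPolynomial.coeff s h)) * Polynomial.X ^ n := by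
    intro s hs
    rw [stmt9Phi_monomial, hh (MvPolynomial.mem_support_iff.mp hs)]
  rw [Finset.sum_congr rfl this, ← Finset.sum_mul, ← map_sum]
  congr 2
  exact h.as_sum.symm

lemma stmt9_eval_one (p : MvPolynomial (Fin 2) K) :
    Polynomial.eval 1 (stmt9Phi K p) = p := by
  induction p using MvPolynomial.induction_on with
  | C a => simp [stmt9Phi, MvPolynomial.algebraMap_eq]
  | add p q hp hq => simp [map_add, hp, hq]
  | mul_X p i hp =>
    simp only [stmt9Phi] at hp ⊢
    simp [hp]

end Aux

/-- Over an algebraically closed field `K`, if `g ∈ K[X,Y]` is the sum of two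
nonzero homogeneous polynomials of consecutive degrees `d` and `d+1` having no common non-unit
factor, then `g` is irreducible. -/
theorem stmt_9 {K : Type*} [Field K] [IsAlgClosed K] (d : ℕ)
    (h₁ h₂ : MvPolynomial (Fin 2) K)
    (hh₁ : h₁.IsHomogeneous d) (hh₂ : h₂.IsHomogeneous (d + 1))
    (h₁ne : h₁ ≠ 0) (h₂ne : h₂ ≠ 0)
    (hcop : ∀ k : MvPolynomial (Fin 2) K, k ∣ h₁ → k ∣ h₂ → IsUnit k) :
    Irreducible (h₁ + h₂) := by
  set φ := stmt9Phi K with hφdef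
  set G : Polynomial (MvPolynomial (Fin 2) K) := φ (h₁ + h₂) with hGdef
  have hG : G = Polynomial.C h₁ * Polynomial.X ^ d
      + Polynomial.C h₂ * Polynomial.X ^ (d + 1) := by
    rw [hGdef, map_add, stmt9Phi_isHomogeneous hh₁, stmt9Phi_isHomogeneous hh₂]
  -- coefficients of G
  have hGcoeff : ∀ n : ℕ, G.coeff n = if n = d then h₁ else if n = d + 1 then h₂ else 0 := by
    intro n
    rw [hG]
    simp only [Polynomial.coeff_add, Polynomial.coeff_C_mul, Polynomial.coeff_X_pow]
    split_ifs with h h' <;> first | omega | simp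
  have hGcoeff_d : G.coeff d = h₁ := by rw [hGcoeff]; simp
  have hGcoeff_d1 : G.coeff (d + 1) = h₂ := by rw [hGcoeff]; simp
  have hGne : G ≠ 0 := fun h => h₂ne (by rw [← hGcoeff_d1, h, Polynomial.coeff_zero])
  -- natDegree of G is d+1
  have hGdeg : G.natDegree = d + 1 := by
    apply le_antisymm
    · apply Polynomial.natDegree_le_iff_coeff_eq_zero.mpr
      intro n hn
      rw [hGcoeff]
      rw [if_neg (by omega), if_neg (by omega)]
    · exact Polynomial.le_natDegree_of_ne_zero (by rw [hGcoeff_d1]; exact h₂ne)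
  have hGlead : G.leadingCoeff = h₂ := by
    rw [Polynomial.leadingCoeff, hGdeg, hGcoeff_d1]
  -- natTrailingDegree of G is d
  have hGtdeg : G.natTrailingDegree = d := by
    apply le_antisymm
    · exact Polynomial.natTrailingDegree_le_of_ne_zero (by rw [hGcoeff_d]; exact h₁ne)
    · apply Polynomial.le_natTrailingDegree hGne
      intro m hm
      rw [hGcoeff, if_neg (by omega), if_neg (by omega)]
  have hGtrail : G.trailingCoeff = h₁ := by
    rw [Polynomial.trailingCoeff, hGtdeg, hGcoeff_d]
  constructor
  · -- not a unit
    intro hu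
    have : IsUnit G := hu.map φ
    have := Polynomial.natDegree_eq_zero_of_isUnit this
    omega
  · rintro a b hab
    -- G = φ a * φ b
    set A := φ a with hAdef
    set B := φ b with hBdef
    have hGAB : G = A * B := by rw [hGdef, hab, map_mul]
    have hAne : A ≠ 0 := fun h => hGne (by rw [hGAB, h, zero_mul])
    have hBne : B ≠ 0 := fun h => hGne (by rw [hGAB, h, mul_zero])
    have hdeg : A.natDegree + B.natDegree = d + 1 := by
      rw [← Polynomial.natDegree_mul hAne hBne, ← hGAB, hGdeg]
    have htdeg : A.natTrailingDegree + B.natTrailingDegree = d := by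
      rw [← Polynomial.natTrailingDegree_mul hAne hBne, ← hGAB, hGtdeg]
    have hlead : A.leadingCoeff * B.leadingCoeff = h₂ := by
      rw [← Polynomial.leadingCoeff_mul, ← hGAB, hGlead]
    have htrail : A.trailingCoeff * B.trailingCoeff = h₁ := by
      rw [← Polynomial.trailingCoeff_mul, ← hGAB, hGtrail]
    have hAle := Polynomial.natTrailingDegree_le_natDegree A
    have hBle := Polynomial.natTrailingDegree_le_natDegree B
    -- one of the two factors is a "monomial" in t
    have key : ∀ (P Q : Polynomial (MvPolynomial (Fin 2) K)) (p : MvPolynomial (Fin 2) K),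
        P ≠ 0 → φ p = P →
        P.natDegree = P.natTrailingDegree →
        P.trailingCoeff ∣ h₁ → P.leadingCoeff ∣ h₂ → IsUnit p := by
      intro P Q p hPne hPp hPdeg hPd1 hPd2
      have hlt : P.leadingCoeff = P.trailingCoeff := by
        rw [Polynomial.leadingCoeff, Polynomial.trailingCoeff, hPdeg]
      have hcunit : IsUnit P.trailingCoeff := hcop _ hPd1 (hlt ▸ hPd2)
      -- P = C c * X ^ m
      have hPeq : P = Polynomial.C P.trailingCoeff * Polynomial.X ^ P.natTrailingDegree := by
        ext n
        simp only [Polynomial.coeff_C_mul, Polynomial.coeff_X_pow]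
        rcases lt_trichotomy n P.natTrailingDegree with h | h | h
        · rw [Polynomial.coeff_eq_zero_of_lt_natTrailingDegree h, if_neg (by omega), mul_zero]
        · rw [h, if_pos rfl, mul_one, Polynomial.trailingCoeff]
        · rw [Polynomial.coeff_eq_zero_of_natDegree_lt (by omega), if_neg (by omega), mul_zero]
      have hp : p = P.trailingCoeff := by
        have := stmt9_eval_one p
        rw [hPp, hPeq] at this
        simpa using this.symm
      rw [hp]
      exact hcunit
    have : A.natDegree = A.natTrailingDegree ∨ B.natDegree = B.natTrailingDegree := by omega
    rcases this with h | h
    · exact Or.inl (key A B a hAne rfl h ⟨B.trailingCoeff, htrail.symm⟩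
        ⟨B.leadingCoeff, hlead.symm⟩)
    · exact Or.inr (key B A b hBne rfl h ⟨A.trailingCoeff, by rw [← htrail, mul_comm]⟩
        ⟨A.leadingCoeff, by rw [← hlead, mul_comm]⟩)
end

section
/- Let q > d be a prime power, 1 ≤ s ≤ d-2, and fix a = (a_{d-1},...,a_{d-s}) ∈ F_q^s. For b = (b_{d-s-1},...,b_1) ∈ F_q^{d-s-1}, let f_b := T^d + Σ_{i=1}^s a_{d-i}T^{d-i} + Σ_{i=s+1}^{d-1} b_{d-i}T^{d-i}. Then the average value set V(d,s,a) := q^{-(d-s-1)} Σ_b V(f_b) satisfies V(d,s,a) = Σ_{r=1}^{d-s} (-1)^{r-1} C(q,r) q^{1-r} + q^{-(d-s-1)} Σ_{r=d-s+1}^{d} (-1)^{r-1} χ_r^a, where χ_r^a is the number of r-element subsets X_r of F_q such that there exists (b, b_0) ∈ F_q^{d-s} with (f_b + b_0) vanishing identically on X_r. -/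
open Polynomial Finset

section Aux

set_option linter.unusedSectionVars false

variable {F : Type*} [Field F] [DecidableEq F]

/-- The polynomial `C p.2 + ∑ j, C (p.1 j) * X^(k-j)`. -/
noncomputable def stmt11pol (k : ℕ) (p : (Fin k → F) × F) : F[X] :=
  C p.2 + ∑ j : Fin k, C (p.1 j) * X ^ (k - (j : ℕ))

lemma stmt11pol_natDegree_le (k : ℕ) (p : (Fin k → F) × F) :
    (stmt11pol k p).natDegree ≤ k := by
  refine (Polynomial.natDegree_add_le _ _).trans (max_le ?_ ?_)
  · simp
  · refine (Polynomial.natDegree_sum_le _ _).trans ?_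
    rw [Finset.fold_max_le]
    refine ⟨Nat.zero_le _, fun j _ => ?_⟩
    exact (Polynomial.natDegree_C_mul_X_pow_le _ _).trans (Nat.sub_le _ _)

lemma stmt11pol_coeff_zero (k : ℕ) (p : (Fin k → F) × F) :
    (stmt11pol k p).coeff 0 = p.2 := by
  rw [stmt11pol, Polynomial.coeff_add, Polynomial.coeff_C, if_pos rfl,
    Polynomial.finset_sum_coeff]
  rw [Finset.sum_eq_zero, add_zero]
  intro j _
  have hj : (j : ℕ) < k := j.isLt
  rw [Polynomial.coeff_C_mul, Polynomial.coeff_X_pow, if_neg (by omega), mul_zero]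

lemma stmt11pol_coeff (k : ℕ) (p : (Fin k → F) × F) (j : Fin k) :
    (stmt11pol k p).coeff (k - (j : ℕ)) = p.1 j := by
  have hj : (j : ℕ) < k := j.isLt
  rw [stmt11pol, Polynomial.coeff_add, Polynomial.coeff_C,
    if_neg (by omega : ¬ k - (j:ℕ) = 0), zero_add, Polynomial.finset_sum_coeff]
  rw [Finset.sum_eq_single j]
  · rw [Polynomial.coeff_C_mul, Polynomial.coeff_X_pow, if_pos rfl, mul_one]
  · intro j' _ hj'
    have hj2 : (j' : ℕ) < k := j'.isLt
    rw [Polynomial.coeff_C_mul, Polynomial.coeff_X_pow, if_neg, mul_zero]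
    intro h
    exact hj' (Fin.ext (by omega))
  · intro h; exact absurd (Finset.mem_univ j) h

lemma stmt11pol_inj (k : ℕ) : Function.Injective (stmt11pol (F := F) k) := by
  intro p p' h
  have h0 : p.2 = p'.2 := by
    rw [← stmt11pol_coeff_zero k p, ← stmt11pol_coeff_zero k p', h]
  have h1 : p.1 = p'.1 := by
    funext j
    rw [← stmt11pol_coeff k p j, ← stmt11pol_coeff k p' j, h]
  exact Prod.ext h1 h0

lemma stmt11pol_surj (k : ℕ) (t : F[X]) (ht : t.natDegree ≤ k) :
    stmt11pol k (fun j : Fin k => t.coeff (k - (j : ℕ)), t.coeff 0) = t := by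
  have hsum : ∑ j : Fin k, (C (t.coeff (k - (j:ℕ))) * X ^ (k - (j:ℕ)) : F[X])
      = ∑ i ∈ Finset.range k, (monomial (i+1)) (t.coeff (i+1)) := by
    rw [Fin.sum_univ_eq_sum_range (fun j => (C (t.coeff (k - j)) * X ^ (k - j) : F[X])) k]
    calc ∑ j ∈ Finset.range k, (C (t.coeff (k - j)) * X ^ (k - j) : F[X])
        = ∑ j ∈ Finset.range k, (monomial (k - j)) (t.coeff (k - j)) := by
          refine Finset.sum_congr rfl fun i _ => ?_
          rw [Polynomial.C_mul_X_pow_eq_monomial]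
      _ = ∑ j ∈ Finset.range k,
            (monomial (k - (k - 1 - j))) (t.coeff (k - (k - 1 - j))) :=
          (Finset.sum_range_reflect
            (fun j => (monomial (k - j)) (t.coeff (k - j))) k).symm
      _ = ∑ i ∈ Finset.range k, (monomial (i+1)) (t.coeff (i+1)) := by
          refine Finset.sum_congr rfl fun i hi => ?_
          rw [Finset.mem_range] at hi
          have h1 : k - (k - 1 - i) = i + 1 := by omega
          rw [h1]
  rw [stmt11pol]
  dsimp only
  rw [hsum]
  have := Polynomial.as_sum_range' t (k+1) (Nat.lt_succ_of_le ht)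
  rw [Finset.sum_range_succ' (fun i => (monomial i) (t.coeff i)) k] at this
  conv_rhs => rw [this]
  rw [add_comm, Polynomial.monomial_zero_left]

lemma stmt11_prod_dvd (Z : Finset F) (t : F[X]) (h : ∀ c ∈ Z, eval c t = 0) :
    (∏ c ∈ Z, (X - C c)) ∣ t := by
  induction Z using Finset.induction_on generalizing t with
  | empty => simp
  | @insert a Z ha ih =>
    have h1 : X - C a ∣ t := Polynomial.dvd_iff_isRoot.2 (h a (Finset.mem_insert_self a Z))
    obtain ⟨u, hu⟩ := h1
    have h2 : ∀ c ∈ Z, eval c u = 0 := by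
      intro c hc
      have := h c (Finset.mem_insert_of_mem hc)
      rw [hu, Polynomial.eval_mul, Polynomial.eval_sub, Polynomial.eval_X,
        Polynomial.eval_C] at this
      rcases mul_eq_zero.1 this with h3 | h3
      · exact absurd (sub_eq_zero.1 h3) (fun h4 => ha (h4 ▸ hc))
      · exact h3
    rw [Finset.prod_insert ha, hu]
    exact mul_dvd_mul_left _ (ih u h2)

lemma stmt11_prod_monic (Z : Finset F) : (∏ c ∈ Z, (X - C c) : F[X]).Monic :=
  Polynomial.monic_prod_of_monic _ _ (fun c _ => Polynomial.monic_X_sub_C c)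

lemma stmt11_prod_natDegree (Z : Finset F) :
    (∏ c ∈ Z, (X - C c) : F[X]).natDegree = Z.card := by
  rw [Polynomial.natDegree_prod _ _ (fun c _ => Polynomial.X_sub_C_ne_zero c)]
  simp [Polynomial.natDegree_X_sub_C]

end Aux
section Aux2

set_option linter.unusedSectionVars false

variable {F : Type*} [Field F] [DecidableEq F]

lemma stmt11omega_coeff (n : ℕ) (w : Fin n → F) (i : Fin n) :
    (∑ j : Fin n, (monomial (j:ℕ)) (w j)).coeff (i : ℕ) = w i := by
  rw [Polynomial.finset_sum_coeff, Finset.sum_eq_single i]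
  · rw [Polynomial.coeff_monomial, if_pos rfl]
  · intro j _ hj
    rw [Polynomial.coeff_monomial, if_neg (fun h => hj (Fin.ext h))]
  · intro h; exact absurd (Finset.mem_univ i) h

lemma stmt11omega_natDegree (n : ℕ) (w : Fin n → F) :
    (∑ j : Fin n, (monomial (j:ℕ)) (w j)).natDegree ≤ n - 1 := by
  refine (Polynomial.natDegree_sum_le _ _).trans ?_
  rw [Finset.fold_max_le]
  refine ⟨Nat.zero_le _, fun j _ => ?_⟩
  have := j.isLt
  exact (Polynomial.natDegree_monomial_le _).trans (by omega)

lemma stmt11omega_eq (n : ℕ) (u : F[X]) (hu : u.natDegree < n ∨ u = 0) :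
    ∑ j : Fin n, (monomial (j:ℕ)) (u.coeff (j:ℕ)) = u := by
  rcases hu with hu | hu
  · rw [Fin.sum_univ_eq_sum_range (fun i => (monomial i) (u.coeff i)) n]
    exact (Polynomial.as_sum_range' u n hu).symm
  · simp [hu]

lemma stmt11_eval_prod_zero (Z : Finset F) (c : F) (hc : c ∈ Z) :
    eval c (∏ x ∈ Z, (X - C x) : F[X]) = 0 := by
  rw [Polynomial.eval_prod]
  exact Finset.prod_eq_zero hc (by simp)

variable [Fintype F]

lemma stmt11_countA (k : ℕ) (P : F[X]) (Z : Finset F) (hZ : Z.card ≤ k + 1) :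
    (Finset.univ.filter (fun p : (Fin k → F) × F =>
        ∀ c ∈ Z, eval c (P + stmt11pol k p) = 0)).card
      = Fintype.card F ^ (k + 1 - Z.card) := by
  classical
  set n := k + 1 - Z.card with hn
  set t₀ := Lagrange.interpolate Z id (fun c => - eval c P) with ht₀
  have hinj : Set.InjOn id (Z : Set F) := fun x _ y _ h => h
  have ht₀deg : t₀.degree < (Z.card : WithBot ℕ) := Lagrange.degree_interpolate_lt _ hinj
  have ht₀nat : t₀.natDegree ≤ k := by
    by_cases h0 : t₀ = 0
    · simp [h0]
    · have := (Polynomial.natDegree_lt_iff_degree_lt h0).2 ht₀deg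
      omega
  have ht₀eval : ∀ c ∈ Z, eval c t₀ = - eval c P := fun c hc =>
    Lagrange.eval_interpolate_at_node _ hinj hc
  have hmono := stmt11_prod_monic Z
  have hdeg : ∀ w : Fin n → F,
      (t₀ + (∏ c ∈ Z, (X - C c)) * ∑ j : Fin n, (monomial (j:ℕ)) (w j)).natDegree ≤ k := by
    intro w
    refine (Polynomial.natDegree_add_le _ _).trans (max_le ht₀nat ?_)
    by_cases hw : (∑ j : Fin n, (monomial (j:ℕ)) (w j)) = 0
    · simp [hw]
    · have hn0 : n ≠ 0 := by
        intro h0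
        exact hw (Finset.sum_eq_zero fun j _ => (h0 ▸ j).elim0)
      rw [Polynomial.natDegree_mul hmono.ne_zero hw, stmt11_prod_natDegree]
      have h1 := stmt11omega_natDegree n w
      omega
  have key : ∀ w : Fin n → F,
      stmt11pol k (fun j : Fin k => (t₀ + (∏ c ∈ Z, (X - C c)) * ∑ j : Fin n, (monomial (j:ℕ)) (w j)).coeff (k - (j:ℕ)),
        (t₀ + (∏ c ∈ Z, (X - C c)) * ∑ j : Fin n, (monomial (j:ℕ)) (w j)).coeff 0)
      = t₀ + (∏ c ∈ Z, (X - C c)) * ∑ j : Fin n, (monomial (j:ℕ)) (w j) := fun w =>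
    stmt11pol_surj k _ (hdeg w)
  rw [show Fintype.card F ^ n = (Finset.univ : Finset (Fin n → F)).card by
    rw [Finset.card_univ, Fintype.card_fun, Fintype.card_fin]]
  refine (Finset.card_bij
    (fun (w : Fin n → F) _ =>
      ((fun j : Fin k => (t₀ + (∏ c ∈ Z, (X - C c)) * ∑ j : Fin n, (monomial (j:ℕ)) (w j)).coeff (k - (j:ℕ)),
        (t₀ + (∏ c ∈ Z, (X - C c)) * ∑ j : Fin n, (monomial (j:ℕ)) (w j)).coeff 0) : (Fin k → F) × F))
    ?_ ?_ ?_).symm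
  · intro w _
    rw [Finset.mem_filter]
    refine ⟨Finset.mem_univ _, fun c hc => ?_⟩
    rw [Polynomial.eval_add, key w, Polynomial.eval_add, Polynomial.eval_mul,
      ht₀eval c hc, stmt11_eval_prod_zero Z c hc]
    ring
  · intro w₁ _ w₂ _ hw
    have := congrArg (stmt11pol k) hw
    rw [key w₁, key w₂] at this
    have h2 := mul_left_cancel₀ hmono.ne_zero (add_left_cancel this)
    funext i
    rw [← stmt11omega_coeff n w₁ i, ← stmt11omega_coeff n w₂ i, h2]
  · intro p hp
    rw [Finset.mem_filter] at hp
    have heq : ∀ c ∈ Z, eval c (stmt11pol k p - t₀) = 0 := by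
      intro c hc
      have h1 := hp.2 c hc
      rw [Polynomial.eval_add] at h1
      rw [Polynomial.eval_sub, ht₀eval c hc]
      linear_combination h1
    obtain ⟨u, hu⟩ := stmt11_prod_dvd Z _ heq
    have hules : u.natDegree < n ∨ u = 0 := by
      by_cases hu0 : u = 0
      · exact Or.inr hu0
      · left
        have h2 : (stmt11pol k p - t₀).natDegree ≤ k :=
          (Polynomial.natDegree_sub_le _ _).trans
            (max_le (stmt11pol_natDegree_le k p) ht₀nat)
        rw [hu, Polynomial.natDegree_mul hmono.ne_zero hu0, stmt11_prod_natDegree] at h2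
        omega
    refine ⟨fun i : Fin n => u.coeff (i:ℕ), Finset.mem_univ _, ?_⟩
    apply stmt11pol_inj k
    rw [key]
    rw [stmt11omega_eq n u hules, ← hu]
    ring

lemma stmt11_countB (k : ℕ) (P : F[X]) (Z : Finset F) (hZ : k + 1 ≤ Z.card) :
    (Finset.univ.filter (fun p : (Fin k → F) × F =>
        ∀ c ∈ Z, eval c (P + stmt11pol k p) = 0)).card ≤ 1 := by
  rw [Finset.card_le_one]
  intro p hp p' hp'
  rw [Finset.mem_filter] at hp hp'
  have heq : ∀ c ∈ Z, eval c (stmt11pol k p - stmt11pol k p') = 0 := by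
    intro c hc
    have h1 := hp.2 c hc
    have h2 := hp'.2 c hc
    rw [Polynomial.eval_add] at h1 h2
    rw [Polynomial.eval_sub]
    linear_combination h1 - h2
  have hdvd := stmt11_prod_dvd Z _ heq
  by_cases hD : stmt11pol k p - stmt11pol k p' = 0
  · exact stmt11pol_inj k (sub_eq_zero.1 hD)
  · exfalso
    have h1 := Polynomial.natDegree_le_of_dvd hdvd hD
    rw [stmt11_prod_natDegree] at h1
    have h2 : (stmt11pol k p - stmt11pol k p').natDegree ≤ k :=
      (Polynomial.natDegree_sub_le _ _).trans
        (max_le (stmt11pol_natDegree_le k p) (stmt11pol_natDegree_le k p'))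
    omega

lemma stmt11_countC (k d : ℕ) (P : F[X]) (hP : P.Monic) (hPd : P.natDegree = d)
    (hkd : k < d) (Z : Finset F) (hZ : d < Z.card) :
    (Finset.univ.filter (fun p : (Fin k → F) × F =>
        ∀ c ∈ Z, eval c (P + stmt11pol k p) = 0)) = ∅ := by
  rw [Finset.filter_eq_empty_iff]
  intro p _
  intro hcon
  have hdegP : P.degree = (d : WithBot ℕ) := by
    rw [Polynomial.degree_eq_natDegree hP.ne_zero, hPd]
  have hdlt : (stmt11pol k p).degree < P.degree := by
    rw [hdegP]
    refine lt_of_le_of_lt (Polynomial.degree_le_natDegree) ?_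
    exact_mod_cast lt_of_le_of_lt (Nat.cast_le.2 (stmt11pol_natDegree_le k p))
      (Nat.cast_lt.2 hkd)
  have hg : (P + stmt11pol k p).Monic := hP.add_of_left hdlt
  have hgdeg : (P + stmt11pol k p).natDegree = d := by
    apply Polynomial.natDegree_eq_of_degree_eq_some
    rw [Polynomial.degree_add_eq_left_of_degree_lt hdlt, hdegP]
  have hdvd := stmt11_prod_dvd Z _ hcon
  have h1 := Polynomial.natDegree_le_of_dvd hdvd hg.ne_zero
  rw [stmt11_prod_natDegree, hgdeg] at h1
  omega

end Aux2

set_option maxHeartbeats 2000000 in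
/-- For `q > d`, `1 ≤ s ≤ d-2` and fixed `a = (a_{d-1},…,a_{d-s}) ∈ F_q^s`,
let `f_b := T^d + ∑_{i=1}^s a_{d-i}T^{d-i} + ∑_{i=s+1}^{d-1} b_{d-i}T^{d-i}` for
`b = (b_{d-s-1},…,b_1) ∈ F_q^{d-s-1}`.  Then the average value set
`V(d,s,a) = q^{-(d-s-1)} ∑_b V(f_b)` equals
`∑_{r=1}^{d-s} (-1)^{r-1} C(q,r) q^{1-r} + q^{-(d-s-1)} ∑_{r=d-s+1}^{d} (-1)^{r-1} χ_r^a`,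
where `χ_r^a` counts the `r`-element subsets of `F_q` on which some `f_b + b_0` vanishes
identically. -/
theorem stmt_11 {F : Type*} [Field F] [Fintype F] [DecidableEq F] (q d s : ℕ)
    (hq : Fintype.card F = q) (hdq : d < q) (hs1 : 1 ≤ s) (hs2 : s ≤ d - 2)
    (a : Fin s → F)
    (f : (Fin (d - s - 1) → F) → Polynomial F)
    (hf : ∀ b, f b = X ^ d + (∑ j : Fin s, C (a j) * X ^ (d - 1 - (j : ℕ)))
        + ∑ j : Fin (d - s - 1), C (b j) * X ^ (d - s - 1 - (j : ℕ)))
    (χ : ℕ → ℕ)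
    (hχ : ∀ r, χ r = Nat.card {X : Finset F // X.card = r ∧
        ∃ (b : Fin (d - s - 1) → F) (b₀ : F), ∀ c ∈ X, (f b).eval c + b₀ = 0}) :
    (∑ b : Fin (d - s - 1) → F,
        ((Finset.image (fun c => (f b).eval c) Finset.univ).card : ℝ)) / (q : ℝ) ^ (d - s - 1)
      = (∑ r ∈ Finset.Icc 1 (d - s),
            (-1 : ℝ) ^ (r - 1) * (Nat.choose q r : ℝ) * (q : ℝ) ^ ((1 : ℤ) - (r : ℤ)))
        + (1 / (q : ℝ) ^ (d - s - 1)) *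
            ∑ r ∈ Finset.Icc (d - s + 1) d, (-1 : ℝ) ^ (r - 1) * (χ r : ℝ) := by
  classical
  have hd3 : 3 ≤ d := by omega
  have hqR : (q : ℝ) ≠ 0 := Nat.cast_ne_zero.2 (by omega)
  have hm1 : d - s = (d - s - 1) + 1 := by omega
  have hkd : (d - s - 1) + 1 < d := by omega
  set P : Polynomial F := X ^ d + ∑ j : Fin s, C (a j) * X ^ (d - 1 - (j : ℕ)) with hP
  -- the evaluation identity
  have hfp : ∀ (b : Fin (d - s - 1) → F) (b₀ c : F),
      (f b).eval c + b₀ = eval c (P + stmt11pol (d - s - 1) (b, b₀)) := by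
    intro b b₀ c
    rw [hf b, hP]
    simp only [stmt11pol, Polynomial.eval_add, Polynomial.eval_pow, Polynomial.eval_X,
      Polynomial.eval_C, Polynomial.eval_finset_sum, Polynomial.eval_mul]
    ring
  -- P is monic of degree d
  have hdsum : (∑ j : Fin s, C (a j) * X ^ (d - 1 - (j : ℕ)) : Polynomial F).degree
      < (X ^ d : Polynomial F).degree := by
    rw [Polynomial.degree_X_pow]
    refine lt_of_le_of_lt (Polynomial.degree_sum_le _ _) ?_
    rw [Finset.sup_lt_iff (by exact_mod_cast WithBot.bot_lt_coe d)]
    intro j _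
    refine lt_of_le_of_lt (Polynomial.degree_C_mul_X_pow_le _ _) ?_
    exact_mod_cast (show d - 1 - (j : ℕ) < d by omega)
  have hPm : P.Monic := by rw [hP]; exact (Polynomial.monic_X_pow d).add_of_left hdsum
  have hPd : P.natDegree = d := by
    rw [hP]
    exact Polynomial.natDegree_eq_of_degree_eq_some
      (by rw [Polynomial.degree_add_eq_left_of_degree_lt hdsum, Polynomial.degree_X_pow])
  -- the root-set map and the counting function
  set R : (Fin (d - s - 1) → F) × F → Finset F :=
    fun p => Finset.univ.filter (fun c => eval c (P + stmt11pol (d - s - 1) p) = 0) with hR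
  set N : Finset F → ℕ :=
    fun Z => (Finset.univ.filter (fun p : (Fin (d - s - 1) → F) × F => Z ⊆ R p)).card with hN
  have hNeq : ∀ Z : Finset F,
      (Finset.univ.filter (fun p : (Fin (d - s - 1) → F) × F => Z ⊆ R p))
      = (Finset.univ.filter (fun p : (Fin (d - s - 1) → F) × F =>
          ∀ c ∈ Z, eval c (P + stmt11pol (d - s - 1) p) = 0)) := by
    intro Z
    apply Finset.filter_congr
    intro p _
    simp [hR, Finset.subset_iff]
  clear_value P R N
  -- Step A : value set as a sum of indicators
  have hA : ∀ b : Fin (d - s - 1) → F,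
      ((Finset.image (fun c => (f b).eval c) Finset.univ).card : ℝ)
      = ∑ b₀ : F, (if (R (b, b₀)).Nonempty then (1 : ℝ) else 0) := by
    intro b
    rw [← Finset.filter_univ_mem (Finset.image (fun c => (f b).eval c) Finset.univ),
      Finset.card_filter]
    push_cast
    refine Fintype.sum_equiv (Equiv.neg F) _ _ (fun v => ?_)
    have h1 : (v ∈ Finset.image (fun c => (f b).eval c) Finset.univ)
        ↔ (R (b, Equiv.neg F v)).Nonempty := by
      rw [hR]
      rw [Finset.filter_nonempty_iff]
      simp only [Finset.mem_image, Finset.mem_univ, true_and, Equiv.neg_apply]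
      constructor
      · rintro ⟨c, hc⟩
        exact ⟨c, by rw [← hfp b (-v) c, hc, add_neg_cancel]⟩
      · rintro ⟨c, hc⟩
        refine ⟨c, ?_⟩
        have h2 := hfp b (-v) c
        rw [hc] at h2
        linear_combination h2
    exact if_congr h1 rfl rfl
  -- Step C : inclusion-exclusion for the nonemptiness indicator
  have hIE : ∀ Rp : Finset F, (if Rp.Nonempty then (1 : ℝ) else 0)
      = ∑ Z ∈ Rp.powerset, (if Z = ∅ then (0 : ℝ) else (-1) ^ (Z.card - 1)) := by
    intro Rp
    have h1 : (∑ Z ∈ Rp.powerset, (-1 : ℝ) ^ Z.card) = if Rp = ∅ then 1 else 0 := by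
      have h0 := Finset.sum_powerset_neg_one_pow_card (x := Rp)
      split_ifs with h
      · subst h; simp
      · rw [if_neg h] at h0
        calc (∑ Z ∈ Rp.powerset, (-1 : ℝ) ^ Z.card)
            = ((∑ Z ∈ Rp.powerset, (-1 : ℤ) ^ Z.card : ℤ) : ℝ) := by push_cast; rfl
          _ = 0 := by rw [h0]; exact Int.cast_zero
    have h2 : ∀ Z : Finset F, (if Z = ∅ then (0 : ℝ) else (-1 : ℝ) ^ (Z.card - 1))
        = (if Z = ∅ then (1 : ℝ) else 0) - (-1 : ℝ) ^ Z.card := by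
      intro Z
      split_ifs with h
      · subst h; simp
      · have hc : 1 ≤ Z.card := Finset.card_pos.2 (Finset.nonempty_iff_ne_empty.2 h)
        have h3 : (-1 : ℝ) ^ Z.card = (-1) ^ (Z.card - 1) * (-1) := by
          conv_lhs => rw [show Z.card = (Z.card - 1) + 1 by omega]
          rw [pow_succ]
        rw [h3]; ring
    rw [Finset.sum_congr rfl (fun Z _ => h2 Z), Finset.sum_sub_distrib, h1,
      Finset.sum_ite_eq' Rp.powerset ∅ (fun _ => (1 : ℝ)),
      if_pos (Finset.empty_mem_powerset Rp)]
    by_cases h : Rp = ∅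
    · simp [h]
    · rw [if_neg h, if_pos (Finset.nonempty_iff_ne_empty.2 h)]; ring
  -- Step D+E+F : numerator as a sum over subsets
  have hnum : (∑ b : Fin (d - s - 1) → F,
        ((Finset.image (fun c => (f b).eval c) Finset.univ).card : ℝ))
      = ∑ r ∈ Finset.range (q + 1), ∑ Z ∈ Finset.powersetCard r (Finset.univ : Finset F),
          (if Z = ∅ then (0 : ℝ) else (-1) ^ (Z.card - 1)) * (N Z : ℝ) := by
    calc (∑ b : Fin (d - s - 1) → F,
          ((Finset.image (fun c => (f b).eval c) Finset.univ).card : ℝ))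
        = ∑ b : Fin (d - s - 1) → F, ∑ b₀ : F,
            (if (R (b, b₀)).Nonempty then (1 : ℝ) else 0) :=
          Finset.sum_congr rfl (fun b _ => hA b)
      _ = ∑ p : (Fin (d - s - 1) → F) × F, (if (R p).Nonempty then (1 : ℝ) else 0) :=
          (Fintype.sum_prod_type (fun p : (Fin (d - s - 1) → F) × F =>
            if (R p).Nonempty then (1 : ℝ) else 0)).symm
      _ = ∑ p : (Fin (d - s - 1) → F) × F, ∑ Z ∈ (R p).powerset,
            (if Z = ∅ then (0 : ℝ) else (-1) ^ (Z.card - 1)) :=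
          Finset.sum_congr rfl (fun p _ => hIE (R p))
      _ = ∑ p : (Fin (d - s - 1) → F) × F, ∑ Z ∈ (Finset.univ : Finset F).powerset,
            (if Z ⊆ R p then (if Z = ∅ then (0 : ℝ) else (-1) ^ (Z.card - 1)) else 0) := by
          refine Finset.sum_congr rfl (fun p _ => ?_)
          rw [show (R p).powerset
              = (Finset.univ : Finset F).powerset.filter (fun Z => Z ⊆ R p) by
            ext Z; simp [Finset.mem_powerset]]
          rw [Finset.sum_filter]
      _ = ∑ Z ∈ (Finset.univ : Finset F).powerset, ∑ p : (Fin (d - s - 1) → F) × F,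
            (if Z ⊆ R p then (if Z = ∅ then (0 : ℝ) else (-1) ^ (Z.card - 1)) else 0) :=
          Finset.sum_comm
      _ = ∑ Z ∈ (Finset.univ : Finset F).powerset,
            (if Z = ∅ then (0 : ℝ) else (-1) ^ (Z.card - 1)) * (N Z : ℝ) := by
          refine Finset.sum_congr rfl (fun Z _ => ?_)
          calc (∑ p : (Fin (d - s - 1) → F) × F,
                (if Z ⊆ R p then (if Z = ∅ then (0 : ℝ) else (-1) ^ (Z.card - 1)) else 0))
              = ∑ p : (Fin (d - s - 1) → F) × F,
                  (if Z = ∅ then (0 : ℝ) else (-1) ^ (Z.card - 1))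
                    * (if Z ⊆ R p then (1 : ℝ) else 0) := by
                refine Finset.sum_congr rfl (fun p _ => ?_)
                split_ifs <;> ring
            _ = (if Z = ∅ then (0 : ℝ) else (-1) ^ (Z.card - 1))
                  * ∑ p : (Fin (d - s - 1) → F) × F, (if Z ⊆ R p then (1 : ℝ) else 0) := by
                rw [Finset.mul_sum]
            _ = _ := by rw [Finset.sum_boole, hN]
      _ = _ := by
          rw [Finset.sum_powerset (Finset.univ : Finset F)
            (fun Z => (if Z = ∅ then (0 : ℝ) else (-1) ^ (Z.card - 1)) * (N Z : ℝ)),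
            Finset.card_univ, hq]
  -- evaluate on the four ranges
  have hT0 : (∑ Z ∈ Finset.powersetCard 0 (Finset.univ : Finset F),
      (if Z = ∅ then (0 : ℝ) else (-1) ^ (Z.card - 1)) * (N Z : ℝ)) = 0 := by
    rw [Finset.powersetCard_zero]
    simp
  have hTA : ∀ r ∈ Finset.Ico 1 (d - s + 1),
      (∑ Z ∈ Finset.powersetCard r (Finset.univ : Finset F),
        (if Z = ∅ then (0 : ℝ) else (-1) ^ (Z.card - 1)) * (N Z : ℝ))
      = (-1 : ℝ) ^ (r - 1) * (q.choose r : ℝ) * (q : ℝ) ^ (d - s - r) := by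
    intro r hr
    rw [Finset.mem_Ico] at hr
    have hterm : ∀ Z ∈ Finset.powersetCard r (Finset.univ : Finset F),
        (if Z = ∅ then (0 : ℝ) else (-1) ^ (Z.card - 1)) * (N Z : ℝ)
        = (-1 : ℝ) ^ (r - 1) * (q : ℝ) ^ (d - s - r) := by
      intro Z hZ
      have hZc : Z.card = r := (Finset.mem_powersetCard_univ.1 hZ)
      have hZne : Z ≠ ∅ := by
        intro h; rw [h] at hZc; simp at hZc; omega
      rw [if_neg hZne, hZc]
      have hNv : N Z = q ^ (d - s - r) := by
        rw [hN]
        dsimp only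
        rw [hNeq Z, stmt11_countA (d - s - 1) P Z (by omega), hq, hZc]
        congr 1
        omega
      rw [hNv]
      push_cast
      ring
    rw [Finset.sum_congr rfl hterm, Finset.sum_const, Finset.card_powersetCard,
      Finset.card_univ, hq]
    push_cast
    ring
  have hTB : ∀ r ∈ Finset.Ico (d - s + 1) (d + 1),
      (∑ Z ∈ Finset.powersetCard r (Finset.univ : Finset F),
        (if Z = ∅ then (0 : ℝ) else (-1) ^ (Z.card - 1)) * (N Z : ℝ))
      = (-1 : ℝ) ^ (r - 1) * (χ r : ℝ) := by
    intro r hr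
    rw [Finset.mem_Ico] at hr
    have hterm : ∀ Z ∈ Finset.powersetCard r (Finset.univ : Finset F),
        (if Z = ∅ then (0 : ℝ) else (-1) ^ (Z.card - 1)) * (N Z : ℝ)
        = (-1 : ℝ) ^ (r - 1) *
            (if (∃ (b : Fin (d - s - 1) → F) (b₀ : F), ∀ c ∈ Z, (f b).eval c + b₀ = 0)
              then (1 : ℝ) else 0) := by
      intro Z hZ
      have hZc : Z.card = r := (Finset.mem_powersetCard_univ.1 hZ)
      have hZne : Z ≠ ∅ := by
        intro h; rw [h] at hZc; simp at hZc; omega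
      rw [if_neg hZne, hZc]
      have hle : N Z ≤ 1 := by
        rw [hN]
        dsimp only
        rw [hNeq Z]
        exact stmt11_countB (d - s - 1) P Z (by omega)
      have hiff : 0 < N Z ↔
          (∃ (b : Fin (d - s - 1) → F) (b₀ : F), ∀ c ∈ Z, (f b).eval c + b₀ = 0) := by
        rw [hN]
        dsimp only
        rw [hNeq Z, Finset.card_pos, Finset.filter_nonempty_iff]
        constructor
        · rintro ⟨p, -, hp⟩
          exact ⟨p.1, p.2, fun c hc => by rw [hfp p.1 p.2 c]; exact hp c hc⟩
        · rintro ⟨b, b₀, hb⟩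
          exact ⟨(b, b₀), Finset.mem_univ _, fun c hc => by rw [← hfp b b₀ c]; exact hb c hc⟩
      have hNv : (N Z : ℝ)
          = (if (∃ (b : Fin (d - s - 1) → F) (b₀ : F), ∀ c ∈ Z, (f b).eval c + b₀ = 0)
              then (1 : ℝ) else 0) := by
        split_ifs with h
        · have := hiff.2 h
          have : N Z = 1 := by omega
          rw [this]; norm_num
        · have : ¬ (0 < N Z) := fun hc => h (hiff.1 hc)
          have : N Z = 0 := by omega
          rw [this]; norm_num
      rw [hNv]
    rw [Finset.sum_congr rfl hterm, ← Finset.mul_sum, Finset.sum_boole]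
    congr 1
    rw [hχ r, Nat.card_eq_fintype_card, Fintype.card_subtype]
    rw [show (Finset.powersetCard r (Finset.univ : Finset F))
        = Finset.univ.filter (fun Z : Finset F => Z.card = r) by
      ext Z; simp [Finset.mem_powersetCard_univ]]
    rw [Finset.filter_filter]
  have hTC : ∀ r ∈ Finset.Ico (d + 1) (q + 1),
      (∑ Z ∈ Finset.powersetCard r (Finset.univ : Finset F),
        (if Z = ∅ then (0 : ℝ) else (-1) ^ (Z.card - 1)) * (N Z : ℝ)) = 0 := by
    intro r hr
    rw [Finset.mem_Ico] at hr
    refine Finset.sum_eq_zero (fun Z hZ => ?_)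
    have hZc : Z.card = r := (Finset.mem_powersetCard_univ.1 hZ)
    have hNv : N Z = 0 := by
      rw [hN]
      dsimp only
      rw [hNeq Z, Finset.card_eq_zero]
      exact stmt11_countC (d - s - 1) d P hPm hPd (by omega) Z (by omega)
    rw [hNv]
    norm_num
  -- assemble
  have hsplit : (∑ r ∈ Finset.range (q + 1),
        ∑ Z ∈ Finset.powersetCard r (Finset.univ : Finset F),
          (if Z = ∅ then (0 : ℝ) else (-1) ^ (Z.card - 1)) * (N Z : ℝ))
      = (∑ r ∈ Finset.Icc 1 (d - s), (-1 : ℝ) ^ (r - 1) * (q.choose r : ℝ)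
            * (q : ℝ) ^ (d - s - r))
        + ∑ r ∈ Finset.Icc (d - s + 1) d, (-1 : ℝ) ^ (r - 1) * (χ r : ℝ) := by
    set T : ℕ → ℝ := fun r => ∑ Z ∈ Finset.powersetCard r (Finset.univ : Finset F),
      (if Z = ∅ then (0 : ℝ) else (-1) ^ (Z.card - 1)) * (N Z : ℝ) with hTdef
    have e1 : Finset.range (q + 1) = Finset.Ico 0 (q + 1) := by
      rw [Finset.range_eq_Ico]
    rw [e1]
    rw [← Finset.sum_Ico_consecutive T (by omega : (0:ℕ) ≤ d + 1) (by omega : d + 1 ≤ q + 1)]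
    rw [← Finset.sum_Ico_consecutive T (by omega : (0:ℕ) ≤ d - s + 1)
      (by omega : d - s + 1 ≤ d + 1)]
    rw [← Finset.sum_Ico_consecutive T (by omega : (0:ℕ) ≤ 1)
      (by omega : 1 ≤ d - s + 1)]
    have e2 : ∑ r ∈ Finset.Ico 0 1, T r = 0 := by
      rw [Finset.sum_eq_single 0]
      · exact hT0
      · intro b hb hb'; rw [Finset.mem_Ico] at hb; omega
      · intro h; simp at h
    have e3 : ∑ r ∈ Finset.Ico 1 (d - s + 1), T r
        = ∑ r ∈ Finset.Icc 1 (d - s), (-1 : ℝ) ^ (r - 1) * (q.choose r : ℝ)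
            * (q : ℝ) ^ (d - s - r) := by
      rw [← Finset.Ico_add_one_right_eq_Icc]
      exact Finset.sum_congr rfl hTA
    have e4 : ∑ r ∈ Finset.Ico (d - s + 1) (d + 1), T r
        = ∑ r ∈ Finset.Icc (d - s + 1) d, (-1 : ℝ) ^ (r - 1) * (χ r : ℝ) := by
      rw [← Finset.Ico_add_one_right_eq_Icc]
      exact Finset.sum_congr rfl hTB
    have e5 : ∑ r ∈ Finset.Ico (d + 1) (q + 1), T r = 0 :=
      Finset.sum_eq_zero hTC
    rw [e2, e3, e4, e5]
    ring
  rw [hnum, hsplit]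
  rw [add_div, Finset.sum_div]
  congr 1
  · refine Finset.sum_congr rfl (fun r hr => ?_)
    rw [Finset.mem_Icc] at hr
    have hpow : (q : ℝ) ^ (d - s - r) / (q : ℝ) ^ (d - s - 1)
        = (q : ℝ) ^ ((1 : ℤ) - (r : ℤ)) := by
      rw [← zpow_natCast (q : ℝ) (d - s - r), ← zpow_natCast (q : ℝ) (d - s - 1),
        ← zpow_sub₀ hqR]
      congr 1
      have h1 : ((d - s - r : ℕ) : ℤ) = (d : ℤ) - s - r := by
        push_cast [Nat.cast_sub (by omega : r ≤ d - s)]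
        omega
      have h2 : ((d - s - 1 : ℕ) : ℤ) = (d : ℤ) - s - 1 := by
        push_cast [Nat.cast_sub (by omega : 1 ≤ d - s)]
        omega
      rw [h1, h2]
      ring
    rw [mul_div_assoc, hpow]
  · rw [eq_comm, mul_comm, ← div_eq_mul_one_div]
end

section
/- For positive integers d ≥ 5, let k_0 := (-1 + √(5+4d))/2 and define h(k) := C(d,k)^2 · (d-k)! for integers 0 ≤ k ≤ d-1. Then h is unimodal on [0, d-1] and attains its maximum at ⌊k_0⌋. -/
/-- For `d ≥ 5`, let `k₀ := (-1 + √(5+4d))/2` and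
`h(k) := C(d,k)² (d-k)!`.  Then `h` is unimodal on `[0, d-1]`: it is nondecreasing before
`⌊k₀⌋`, nonincreasing from `⌊k₀⌋` on, and attains its maximum at `⌊k₀⌋`. -/
theorem stmt_15 (d : ℕ) (hd : 5 ≤ d)
    (h : ℕ → ℕ) (hh : ∀ k, h k = (Nat.choose d k) ^ 2 * Nat.factorial (d - k))
    (k₀ : ℝ) (hk₀ : k₀ = (-1 + Real.sqrt (5 + 4 * (d : ℝ))) / 2) :
    (∀ k : ℕ, k + 1 ≤ d - 1 →
        (k < Nat.floor k₀ → h k ≤ h (k + 1)) ∧ (Nat.floor k₀ ≤ k → h (k + 1) ≤ h k)) ∧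
    ∀ k : ℕ, k ≤ d - 1 → h k ≤ h (Nat.floor k₀) := by
  set m := Nat.floor k₀ with hm
  have h5 : (0:ℝ) ≤ 5 + 4 * (d:ℝ) := by positivity
  have hs : Real.sqrt (5 + 4 * (d:ℝ)) ^ 2 = 5 + 4 * (d:ℝ) := Real.sq_sqrt h5
  have hsnn : (0:ℝ) ≤ Real.sqrt (5 + 4 * (d:ℝ)) := Real.sqrt_nonneg _
  have hdnn : (0:ℝ) ≤ (d:ℝ) := Nat.cast_nonneg d
  have hk0nn : 0 ≤ k₀ := by rw [hk₀]; nlinarith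
  have hquad : k₀ ^ 2 + k₀ = (d:ℝ) + 1 := by rw [hk₀]; linear_combination hs / 4
  have hfl : (m:ℝ) ≤ k₀ := Nat.floor_le hk0nn
  have hfl2 : k₀ < (m:ℝ) + 1 := Nat.lt_floor_add_one k₀
  have hA : m ^ 2 + m ≤ d + 1 := by
    have hr : ((m:ℝ)) ^ 2 + (m:ℝ) ≤ (d:ℝ) + 1 := by nlinarith
    exact_mod_cast hr
  have hB : d ≤ m ^ 2 + 3 * m := by
    have hr : (d:ℝ) < (m:ℝ) ^ 2 + 3 * (m:ℝ) + 1 := by nlinarith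
    have hn : d < m ^ 2 + 3 * m + 1 := by exact_mod_cast hr
    exact Nat.lt_succ_iff.mp hn
  have hlt : m < d := by
    by_contra hc
    push_neg at hc
    have hp : d ^ 2 ≤ m ^ 2 := Nat.pow_le_pow_left hc 2
    nlinarith
  -- step lemma
  have step : ∀ k, k + 2 ≤ d →
      (((k+1)^2 ≤ d - k → h k ≤ h (k+1)) ∧ (d - k ≤ (k+1)^2 → h (k+1) ≤ h k)) := by
    intro k hk2
    have hdk : d - k = (d - (k+1)) + 1 := by omega
    have hch : Nat.choose d (k+1) * (k+1) = Nat.choose d k * (d - k) :=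
      Nat.choose_succ_right_eq d k
    have e1 : h k = (Nat.choose d k ^ 2 * Nat.factorial (d - (k+1))) * (d - k) := by
      rw [hh, hdk, Nat.factorial_succ, ← hdk]; ring
    have e2 : h (k+1) * (k+1)^2
        = (Nat.choose d k ^ 2 * Nat.factorial (d - (k+1))) * (d - k) * (d - k) := by
      rw [hh]
      calc Nat.choose d (k+1) ^ 2 * Nat.factorial (d-(k+1)) * (k+1)^2
          = (Nat.choose d (k+1) * (k+1))^2 * Nat.factorial (d-(k+1)) := by ring
        _ = (Nat.choose d k * (d-k))^2 * Nat.factorial (d-(k+1)) := by rw [hch]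
        _ = _ := by ring
    constructor
    · intro hle
      have hmul : h k * (k+1)^2 ≤ h (k+1) * (k+1)^2 := by
        rw [e2, e1]
        exact Nat.mul_le_mul_left _ hle
      exact Nat.le_of_mul_le_mul_right hmul (by positivity)
    · intro hle
      have hmul : h (k+1) * (k+1)^2 ≤ h k * (k+1)^2 := by
        rw [e2, e1]
        exact Nat.mul_le_mul_left _ hle
      exact Nat.le_of_mul_le_mul_right hmul (by positivity)
  have part1 : ∀ k : ℕ, k + 1 ≤ d - 1 →
      (k < m → h k ≤ h (k + 1)) ∧ (m ≤ k → h (k + 1) ≤ h k) := by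
    intro k hk
    have hk2 : k + 2 ≤ d := by omega
    obtain ⟨s1, s2⟩ := step k hk2
    constructor
    · intro hkm
      apply s1
      have hle : k + 1 ≤ m := hkm
      have hp : (k+1)^2 ≤ m^2 := Nat.pow_le_pow_left hle 2
      have hkd : (k+1)^2 + k ≤ d := by linarith
      exact Nat.le_sub_of_add_le hkd
    · intro hmk
      apply s2
      have hp : m^2 ≤ k^2 := Nat.pow_le_pow_left hmk 2
      have hkd : d ≤ (k+1)^2 + k := by nlinarith
      exact Nat.sub_le_iff_le_add.mpr hkd
  have hmd : m ≤ d - 1 := by omega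
  have inc : ∀ i, i ≤ m → h (m - i) ≤ h m := by
    intro i
    induction i with
    | zero => intro _; simp
    | succ n ih =>
      intro hi
      have h1 : m - (n+1) + 1 = m - n := by omega
      have h2 : m - (n+1) + 1 ≤ d - 1 := by omega
      have hstep := (part1 (m - (n+1)) h2).1 (by omega)
      calc h (m - (n+1)) ≤ h (m - (n+1) + 1) := hstep
        _ = h (m - n) := by rw [h1]
        _ ≤ h m := ih (by omega)
  have dec : ∀ i, m + i ≤ d - 1 → h (m + i) ≤ h m := by
    intro i
    induction i with
    | zero => intro _; simp
    | succ n ih =>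
      intro hi
      have h2 : (m + n) + 1 ≤ d - 1 := by omega
      have hstep := (part1 (m + n) h2).2 (by omega)
      calc h (m + (n+1)) = h ((m + n) + 1) := by rw [Nat.add_assoc]
        _ ≤ h (m + n) := hstep
        _ ≤ h m := ih (by omega)
  refine ⟨part1, ?_⟩
  intro k hk
  rcases le_or_gt k m with hkm | hmk
  · have := inc (m - k) (by omega)
    rwa [Nat.sub_sub_self hkm] at this
  · have := dec (k - m) (by omega)
    rwa [Nat.add_sub_cancel' hmk.le] at this
end

section
/- For every integer d ≥ 5, Σ_{k=0}^{d-1} C(d,k)^2 (d-k)! ≤ 14 · d^{d+1} · e^{2√d - d}. -/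
open Finset

/-- Stirling upper bound: `n! ≤ e √n (n/e)^n` for `n ≥ 1`. -/
private lemma factorial_upper (n : ℕ) (hn : 1 ≤ n) :
    (n.factorial : ℝ) ≤ Real.exp 1 * Real.sqrt n * ((n : ℝ) / Real.exp 1) ^ n := by
  obtain ⟨m, rfl⟩ := Nat.exists_eq_succ_of_ne_zero (Nat.one_le_iff_ne_zero.mp hn)
  have hp1 : 0 < Stirling.stirlingSeq (m + 1) := Stirling.stirlingSeq'_pos m
  have hp0 : 0 < Stirling.stirlingSeq 1 := Stirling.stirlingSeq'_pos 0
  have h1 : Real.log (Stirling.stirlingSeq (m + 1)) ≤ Real.log (Stirling.stirlingSeq 1) := by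
    have := Stirling.log_stirlingSeq'_antitone (Nat.zero_le m)
    simpa using this
  have h2 : Stirling.stirlingSeq (m + 1) ≤ Stirling.stirlingSeq 1 := by
    have := Real.exp_le_exp.mpr h1
    rwa [Real.exp_log hp1, Real.exp_log hp0] at this
  rw [Stirling.stirlingSeq_one] at h2
  set n := m + 1 with hn'
  have hn0 : (0 : ℝ) < n := by positivity
  have hden : 0 < Real.sqrt (2 * n) * ((n : ℝ) / Real.exp 1) ^ n := by positivity
  have hdef : Stirling.stirlingSeq n
      = (n.factorial : ℝ) / (Real.sqrt (2 * n) * ((n : ℝ) / Real.exp 1) ^ n) := rfl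
  rw [hdef, div_le_iff₀ hden] at h2
  have hsqrt : Real.sqrt (2 * n) = Real.sqrt 2 * Real.sqrt n := by
    rw [Real.sqrt_mul (by norm_num)]
  have hs2 : (0:ℝ) < Real.sqrt 2 := by positivity
  calc (n.factorial : ℝ) ≤ Real.exp 1 / Real.sqrt 2 *
        (Real.sqrt (2 * n) * ((n : ℝ) / Real.exp 1) ^ n) := h2
    _ = Real.exp 1 * Real.sqrt n * ((n : ℝ) / Real.exp 1) ^ n := by
        rw [hsqrt]; field_simp

/-- `x^m ≤ e^x m!` for `x ≥ 0`. -/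
private lemma pow_le_exp_mul_factorial {x : ℝ} (hx : 0 ≤ x) (m : ℕ) :
    x ^ m ≤ Real.exp x * m.factorial := by
  have h := Real.sum_le_exp_of_nonneg hx (m + 1)
  have h2 : x ^ m / m.factorial ≤ Real.exp x :=
    le_trans (Finset.single_le_sum (f := fun i => x ^ i / i.factorial)
      (fun i _ => by positivity) (Finset.self_mem_range_succ m)) h
  have hm : (0 : ℝ) < m.factorial := by positivity
  calc x ^ m = x ^ m / m.factorial * m.factorial := by field_simp
    _ ≤ Real.exp x * m.factorial := mul_le_mul_of_nonneg_right h2 hm.le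

private lemma two_mul_factorial_le (k : ℕ) :
    (2 * k).factorial ≤ 4 ^ k * k.factorial ^ 2 := by
  induction k with
  | zero => simp
  | succ n ih =>
      have h1 : 2 * (n + 1) = (2 * n + 1) + 1 := by ring
      rw [h1, Nat.factorial_succ, Nat.factorial_succ]
      calc (2 * n + 1 + 1) * ((2 * n + 1) * (2 * n).factorial)
          ≤ (2 * n + 2) * ((2 * n + 2) * (4 ^ n * n.factorial ^ 2)) := by
            apply Nat.mul_le_mul (by omega)
            exact Nat.mul_le_mul (by omega) ih
        _ = 4 ^ (n + 1) * ((n + 1) * n.factorial) ^ 2 := by ring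
        _ = 4 ^ (n + 1) * (n + 1).factorial ^ 2 := by rw [Nat.factorial_succ]

/-- `∑_{k<d} d^k/(k!)² ≤ e^{2√d}`. -/
private lemma sum_pow_div_sq_factorial (d : ℕ) :
    ∑ k ∈ Finset.range d, (d : ℝ) ^ k / (k.factorial : ℝ) ^ 2
      ≤ Real.exp (2 * Real.sqrt d) := by
  have hs : ∀ k : ℕ, (d : ℝ) ^ k / (k.factorial : ℝ) ^ 2
      ≤ (2 * Real.sqrt d) ^ (2 * k) / ((2 * k).factorial : ℝ) := by
    intro k
    have h1 : (d : ℝ) ^ k = Real.sqrt d ^ (2 * k) := by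
      rw [pow_mul, Real.sq_sqrt (Nat.cast_nonneg d)]
    have h2 : (((2 * k).factorial : ℝ)) ≤ 2 ^ (2 * k) * (k.factorial : ℝ) ^ 2 := by
      have := two_mul_factorial_le k
      have h4 : (4 : ℝ) ^ k = 2 ^ (2 * k) := by
        rw [pow_mul]; norm_num
      calc (((2 * k).factorial : ℝ)) ≤ ((4 ^ k * k.factorial ^ 2 : ℕ) : ℝ) := by
            exact_mod_cast this
        _ = 2 ^ (2 * k) * (k.factorial : ℝ) ^ 2 := by push_cast; rw [h4]
    rw [h1, mul_pow, div_le_div_iff₀ (by positivity) (by positivity)]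
    calc Real.sqrt d ^ (2 * k) * ((2 * k).factorial : ℝ)
        ≤ Real.sqrt d ^ (2 * k) * (2 ^ (2 * k) * (k.factorial : ℝ) ^ 2) :=
          mul_le_mul_of_nonneg_left h2 (by positivity)
      _ = 2 ^ (2 * k) * Real.sqrt d ^ (2 * k) * (k.factorial : ℝ) ^ 2 := by ring
  calc ∑ k ∈ Finset.range d, (d : ℝ) ^ k / (k.factorial : ℝ) ^ 2
      ≤ ∑ k ∈ Finset.range d, (2 * Real.sqrt d) ^ (2 * k) / ((2 * k).factorial : ℝ) :=
        Finset.sum_le_sum fun k _ => hs k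
    _ = ∑ n ∈ (Finset.range d).image (fun k => 2 * k),
          (2 * Real.sqrt d) ^ n / (n.factorial : ℝ) := by
        rw [Finset.sum_image (fun a _ b _ h => Nat.eq_of_mul_eq_mul_left (by norm_num) h)]
    _ ≤ ∑ n ∈ Finset.range (2 * d), (2 * Real.sqrt d) ^ n / (n.factorial : ℝ) := by
        apply Finset.sum_le_sum_of_subset_of_nonneg
        · intro x hx
          simp only [Finset.mem_image, Finset.mem_range] at hx ⊢
          obtain ⟨k, hk, rfl⟩ := hx
          omega
        · intro i _ _; positivity
    _ ≤ Real.exp (2 * Real.sqrt d) := Real.sum_le_exp_of_nonneg (by positivity) _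

/-- For every integer `d ≥ 5`,
`∑_{k=0}^{d-1} C(d,k)² (d-k)! ≤ 14 d^{d+1} e^{2√d - d}`. -/
theorem stmt_16 (d : ℕ) (hd : 5 ≤ d) :
    (∑ k ∈ Finset.range d, ((Nat.choose d k : ℝ) ^ 2 * Nat.factorial (d - k)))
      ≤ 14 * (d : ℝ) ^ (d + 1) * Real.exp (2 * Real.sqrt d - d) := by
  have hd0 : (0 : ℝ) < d := by positivity
  have hfac : (d.factorial : ℝ) ≤ Real.exp 1 * Real.sqrt d * ((d : ℝ) / Real.exp 1) ^ d :=
    factorial_upper d (by omega)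
  set E : ℝ := Real.exp 1 with hE
  have hE0 : 0 < E := Real.exp_pos 1
  -- termwise bound
  have hterm : ∀ k ∈ Finset.range d,
      ((Nat.choose d k : ℝ) ^ 2 * Nat.factorial (d - k))
        ≤ E ^ 2 * (d : ℝ) * Real.exp (-(d : ℝ)) * (d : ℝ) ^ d
          * ((d : ℝ) ^ k / (k.factorial : ℝ) ^ 2) := by
    intro k hk
    rw [Finset.mem_range] at hk
    have hkd : k ≤ d := hk.le
    have hKpos : (0 : ℝ) < (k.factorial : ℝ) := by positivity
    have hMpos : (0 : ℝ) < ((d - k).factorial : ℝ) := by positivity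
    have hCast : (Nat.choose d k : ℝ)
        = (d.factorial : ℝ) / ((k.factorial : ℝ) * ((d - k).factorial : ℝ)) :=
      Nat.cast_choose ℝ hkd
    -- reduce to : (d!)^2 ≤ E^2 d e^{-d} d^{d+k} * (d-k)!
    have hkey : ((d.factorial : ℝ)) ^ 2
        ≤ E ^ 2 * (d : ℝ) * Real.exp (-(d : ℝ)) * (d : ℝ) ^ (d + k)
          * ((d - k).factorial : ℝ) := by
      have hM : (d : ℝ) ^ (d - k) * Real.exp (-(d : ℝ)) ≤ ((d - k).factorial : ℝ) := by
        have h2 : (d : ℝ) ^ (d - k) ≤ Real.exp d * ((d - k).factorial : ℝ) :=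
          pow_le_exp_mul_factorial hd0.le (d - k)
        have hee : Real.exp (d : ℝ) * Real.exp (-(d : ℝ)) = 1 := by
          rw [← Real.exp_add]; simp
        calc (d : ℝ) ^ (d - k) * Real.exp (-(d : ℝ))
            ≤ Real.exp d * ((d - k).factorial : ℝ) * Real.exp (-(d : ℝ)) :=
              mul_le_mul_of_nonneg_right h2 (Real.exp_pos _).le
          _ = ((d - k).factorial : ℝ) * (Real.exp (d : ℝ) * Real.exp (-(d : ℝ))) := by ring
          _ = ((d - k).factorial : ℝ) := by rw [hee, mul_one]
      have hdive : ((d : ℝ) / E) ^ d = (d : ℝ) ^ d * Real.exp (-(d : ℝ)) := by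
        rw [div_pow, hE, Real.exp_one_pow, div_eq_mul_inv, ← Real.exp_neg]
      have hpowsplit : ((d : ℝ) ^ d) ^ 2 = (d : ℝ) ^ (d + k) * (d : ℝ) ^ (d - k) := by
        rw [← pow_add, ← pow_mul]
        congr 1
        omega
      calc ((d.factorial : ℝ)) ^ 2
          ≤ (E * Real.sqrt d * ((d : ℝ) / E) ^ d) ^ 2 := by
            apply pow_le_pow_left₀ (by positivity) hfac
        _ = E ^ 2 * (d : ℝ) * Real.exp (-(d : ℝ)) * (d : ℝ) ^ (d + k)
            * ((d : ℝ) ^ (d - k) * Real.exp (-(d : ℝ))) := by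
            rw [hdive, mul_pow, mul_pow, Real.sq_sqrt hd0.le, mul_pow, hpowsplit]
            ring
        _ ≤ E ^ 2 * (d : ℝ) * Real.exp (-(d : ℝ)) * (d : ℝ) ^ (d + k)
            * ((d - k).factorial : ℝ) :=
            mul_le_mul_of_nonneg_left hM (by positivity)
    have hmain : (Nat.choose d k : ℝ) ^ 2 * ((d - k).factorial : ℝ)
        = ((d.factorial : ℝ)) ^ 2 / ((k.factorial : ℝ) ^ 2 * ((d - k).factorial : ℝ)) := by
      rw [hCast]; field_simp
    rw [hmain, div_le_iff₀ (by positivity)]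
    calc ((d.factorial : ℝ)) ^ 2
        ≤ E ^ 2 * (d : ℝ) * Real.exp (-(d : ℝ)) * (d : ℝ) ^ (d + k)
          * ((d - k).factorial : ℝ) := hkey
      _ = E ^ 2 * (d : ℝ) * Real.exp (-(d : ℝ)) * (d : ℝ) ^ d
          * ((d : ℝ) ^ k / (k.factorial : ℝ) ^ 2)
          * ((k.factorial : ℝ) ^ 2 * ((d - k).factorial : ℝ)) := by
          rw [pow_add]; field_simp
  have hE14 : E ^ 2 ≤ 14 := by
    have h := Real.exp_one_lt_d9
    nlinarith [Real.exp_pos 1]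
  calc (∑ k ∈ Finset.range d, ((Nat.choose d k : ℝ) ^ 2 * Nat.factorial (d - k)))
      ≤ ∑ k ∈ Finset.range d, E ^ 2 * (d : ℝ) * Real.exp (-(d : ℝ)) * (d : ℝ) ^ d
          * ((d : ℝ) ^ k / (k.factorial : ℝ) ^ 2) := Finset.sum_le_sum hterm
    _ = E ^ 2 * (d : ℝ) * Real.exp (-(d : ℝ)) * (d : ℝ) ^ d
          * ∑ k ∈ Finset.range d, (d : ℝ) ^ k / (k.factorial : ℝ) ^ 2 := by
        rw [← Finset.mul_sum]
    _ ≤ E ^ 2 * (d : ℝ) * Real.exp (-(d : ℝ)) * (d : ℝ) ^ d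
          * Real.exp (2 * Real.sqrt d) :=
        mul_le_mul_of_nonneg_left (sum_pow_div_sq_factorial d) (by positivity)
    _ ≤ 14 * (d : ℝ) ^ (d + 1) * Real.exp (2 * Real.sqrt d - d) := by
        have hE2 : Real.exp (2 * Real.sqrt d - d)
            = Real.exp (2 * Real.sqrt d) * Real.exp (-(d : ℝ)) := by
          rw [← Real.exp_add]; ring_nf
        have h1 : (0:ℝ) ≤ (d : ℝ) * Real.exp (-(d:ℝ)) * (d : ℝ) ^ d
            * Real.exp (2 * Real.sqrt d) := by positivity
        calc E ^ 2 * (d : ℝ) * Real.exp (-(d:ℝ)) * (d : ℝ) ^ d * Real.exp (2 * Real.sqrt d)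
            = E ^ 2 * ((d : ℝ) * Real.exp (-(d:ℝ)) * (d : ℝ) ^ d
              * Real.exp (2 * Real.sqrt d)) := by ring
          _ ≤ 14 * ((d : ℝ) * Real.exp (-(d:ℝ)) * (d : ℝ) ^ d
              * Real.exp (2 * Real.sqrt d)) := mul_le_mul_of_nonneg_right hE14 h1
          _ = 14 * (d : ℝ) ^ (d + 1) * Real.exp (2 * Real.sqrt d - d) := by
              rw [hE2, pow_succ]; ring
end
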